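/- arXiv:1107.2957 — 9 statements merged into one kernel-verified Lean document; each statement's English description precedes it below -/
import Mathlib

section
/- If a mechanism (w,p) for scheduling on related machines is truthful and anonymous, then the functions h_i appearing in the Archer–Tardos payment formula are identical across machines: there is a single function h : ℝ_{>0}^{m-1} → ℝ such that h_i(v) = h(v) for all machines i and all bid vectors v of the other machines. -/
open MeasureTheory

/-- Swapping `j.succ` and `j.castSucc` carries the embedding skipping `j.castSucc`
to the embedding skipping `j.succ`. -/
lemma swap_succ_castSucc_succAbove {n : ℕ} (j m : Fin n) :
    Equiv.swap (Fin.succ j) (Fin.castSucc j) ((Fin.castSucc j).succAbove m) =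
      (Fin.succ j).succAbove m := by
  rcases lt_trichotomy m j with hlt | rfl | hgt
  · have hcc : m.castSucc < j.castSucc := by
      simpa [Fin.castSucc_lt_castSucc_iff] using hlt
    have h1 : (Fin.castSucc j).succAbove m = m.castSucc :=
      Fin.succAbove_of_castSucc_lt _ _ hcc
    have h2 : (Fin.succ j).succAbove m = m.castSucc :=
      Fin.succAbove_of_castSucc_lt _ _ (lt_trans hcc (Fin.castSucc_lt_succ (i := j)))
    rw [h1, h2, Equiv.swap_apply_of_ne_of_ne]
    · exact ne_of_lt (lt_trans hcc (Fin.castSucc_lt_succ (i := j)))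
    · exact ne_of_lt hcc
  · have h1 : (Fin.castSucc m).succAbove m = m.succ :=
      Fin.succAbove_of_le_castSucc _ _ le_rfl
    have h2 : (Fin.succ m).succAbove m = m.castSucc :=
      Fin.succAbove_of_castSucc_lt _ _ (Fin.castSucc_lt_succ (i := m))
    rw [h1, h2, Equiv.swap_apply_left]
  · have hle : j.succ ≤ m.castSucc := by
      have hgt' : (j : ℕ) < (m : ℕ) := hgt
      rw [Fin.le_def, Fin.val_succ, Fin.coe_castSucc]
      omega
    have h1 : (Fin.castSucc j).succAbove m = m.succ :=
      Fin.succAbove_of_le_castSucc _ _ (le_trans (le_of_lt (Fin.castSucc_lt_succ (i := j))) hle)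
    have h2 : (Fin.succ j).succAbove m = m.succ :=
      Fin.succAbove_of_le_castSucc _ _ hle
    rw [h1, h2, Equiv.swap_apply_of_ne_of_ne]
    · exact ne_of_gt (lt_of_le_of_lt hle (Fin.castSucc_lt_succ (i := m)))
    · exact ne_of_gt (lt_trans (lt_of_lt_of_le (Fin.castSucc_lt_succ (i := j)) hle)
        (Fin.castSucc_lt_succ (i := m)))

/-- Updating coordinate `k` and then swapping `k, l` is the same as swapping first
and then updating coordinate `l`. -/
lemma update_comp_swap {n : ℕ} (b : Fin n → ℝ) (k l : Fin n) (u : ℝ) :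
    (Function.update b k u) ∘ (Equiv.swap k l) = Function.update (b ∘ Equiv.swap k l) l u := by
  funext q
  by_cases hq : q = l
  · subst hq
    have hs : Equiv.swap k q q = k := Equiv.swap_apply_right k q
    show Function.update b k u (Equiv.swap k q q) = Function.update (b ∘ Equiv.swap k q) q u q
    rw [hs, Function.update_self, Function.update_self]
  · have hne : Equiv.swap k l q ≠ k := by
      intro hc
      apply hq
      have := (Equiv.swap k l).injective (a₁ := q) (a₂ := l)
      exact this (by rw [hc, Equiv.swap_apply_right])
    simp [Function.comp, Function.update_of_ne hne, Function.update_of_ne hq]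

/-- If a mechanism `(w, p)` for scheduling on related machines is truthful (so payments
have the Archer–Tardos form with functions `h i`) and anonymous, then the `h i` are
identical across machines: there is a single `h0` with `h i v = h0 v` for all machines
`i` and all positive bid vectors `v` of the other machines. -/
theorem common_h_of_truthful_anonymous (n : ℕ) (L : ℝ) (hL : 0 < L)
    (w p : (Fin (n + 1) → ℝ) → Fin (n + 1) → ℝ)
    (h : Fin (n + 1) → (Fin n → ℝ) → ℝ)
    -- allocations are nonnegative workloads summing to the total job length L
    (halloc : ∀ b : Fin (n + 1) → ℝ, (∀ j, 0 < b j) →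
      (∀ i, 0 ≤ w b i) ∧ ∑ i, w b i = L)
    -- truthful payments (Archer–Tardos form)
    (hpay : ∀ b : Fin (n + 1) → ℝ, (∀ j, 0 < b j) → ∀ i,
      p b i = h i (b ∘ i.succAbove) + b i * w b i -
        ∫ u in Set.Ioc (0 : ℝ) (b i), w (Function.update b i u) i)
    -- monotone decreasing allocation
    (hmono : ∀ b : Fin (n + 1) → ℝ, (∀ j, 0 < b j) → ∀ i, ∀ x y : ℝ,
      0 < x → x ≤ y → w (Function.update b i y) i ≤ w (Function.update b i x) i)
    -- anonymity: swapping a unique bid with another machine's bid swaps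
    -- allocation and payment
    (hanon : ∀ b : Fin (n + 1) → ℝ, (∀ j, 0 < b j) →
      ∀ k l : Fin (n + 1), (∀ j, j ≠ k → b j ≠ b k) → l ≠ k →
        w (b ∘ Equiv.swap k l) l = w b k ∧ p (b ∘ Equiv.swap k l) l = p b k) :
    ∃ h0 : (Fin n → ℝ) → ℝ, ∀ (i : Fin (n + 1)) (v : Fin n → ℝ),
      (∀ j, 0 < v j) → h i v = h0 v := by
  refine ⟨h 0, ?_⟩
  have key : ∀ j : Fin n, ∀ v : Fin n → ℝ, (∀ m, 0 < v m) →
      h (Fin.castSucc j) v = h (Fin.succ j) v := by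
    intro j v hv
    set k : Fin (n + 1) := Fin.succ j with hk
    set l : Fin (n + 1) := Fin.castSucc j with hl
    have hlk : l ≠ k := ne_of_lt (Fin.castSucc_lt_succ (i := j))
    -- choose a fresh bid t for machine k
    set t : ℝ := 1 + ∑ m, |v m| with ht
    have hsum_nonneg : 0 ≤ ∑ m, |v m| := Finset.sum_nonneg fun m _ => abs_nonneg _
    have htpos : 0 < t := by positivity
    have hvt : ∀ m, v m < t := by
      intro m
      have h1 : v m ≤ |v m| := le_abs_self _
      have h2 : |v m| ≤ ∑ m', |v m'| :=
        Finset.single_le_sum (fun m' _ => abs_nonneg (v m')) (Finset.mem_univ m)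
      linarith
    set b : Fin (n + 1) → ℝ := k.insertNth t v with hb
    have hbk : b k = t := by rw [hb]; exact Fin.insertNth_apply_same (α := fun _ => ℝ) k t v
    have hbs : ∀ m, b (k.succAbove m) = v m := by
      intro m; rw [hb]; exact Fin.insertNth_apply_succAbove (α := fun _ => ℝ) k t v m
    have hbpos : ∀ q, 0 < b q := by
      intro q
      by_cases hq : q = k
      · subst hq; rw [hbk]; exact htpos
      · obtain ⟨m, rfl⟩ := Fin.exists_succAbove_eq hq
        rw [hbs]; exact hv m
    have hbuniq : ∀ q, q ≠ k → b q ≠ b k := by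
      intro q hq
      obtain ⟨m, rfl⟩ := Fin.exists_succAbove_eq hq
      rw [hbs, hbk]
      exact ne_of_lt (hvt m)
    obtain ⟨hwEq, hpEq⟩ := hanon b hbpos k l hbuniq hlk
    set b' : Fin (n + 1) → ℝ := b ∘ Equiv.swap k l with hb'
    have hb'pos : ∀ q, 0 < b' q := fun q => hbpos _
    have hb'l : b' l = t := by
      show b (Equiv.swap k l l) = t
      rw [Equiv.swap_apply_right, hbk]
    -- the remaining bids from l's perspective in b' are exactly v
    have hb'v : b' ∘ l.succAbove = v := by
      funext m
      show b (Equiv.swap k l (l.succAbove m)) = v m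
      rw [hk, hl, swap_succ_castSucc_succAbove, ← hk]
      exact hbs m
    have hbv : b ∘ k.succAbove = v := funext hbs
    -- the finite set of "other" bids
    have hTfin : (Set.range v).Finite := Set.finite_range v
    have hT0 : (volume : Measure ℝ) (Set.range v) = 0 := hTfin.measure_zero _
    -- integrands agree a.e.
    have hIeq : (∫ u in Set.Ioc (0 : ℝ) t, w (Function.update b' l u) l) =
        ∫ u in Set.Ioc (0 : ℝ) t, w (Function.update b k u) k := by
      apply MeasureTheory.setIntegral_congr_ae measurableSet_Ioc
      have hae : ∀ᵐ u : ℝ, u ∉ Set.range v :=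
        MeasureTheory.measure_eq_zero_iff_ae_notMem.mp hT0
      filter_upwards [hae] with u hu hmem
      -- for such u, apply anonymity to update b k u
      set bu : Fin (n + 1) → ℝ := Function.update b k u with hbu
      have hbupos : ∀ q, 0 < bu q := by
        intro q
        by_cases hq : q = k
        · subst hq; simp [hbu]; exact hmem.1
        · simpa [hbu, Function.update_of_ne hq] using hbpos q
      have hbuk : bu k = u := Function.update_self k u b
      have hbuuniq : ∀ q, q ≠ k → bu q ≠ bu k := by
        intro q hq
        rw [hbuk, hbu]
        rw [Function.update_of_ne hq]
        obtain ⟨m, rfl⟩ := Fin.exists_succAbove_eq hq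
        rw [hbs]
        exact fun hc => hu ⟨m, hc⟩
      have := (hanon bu hbupos k l hbuuniq hlk).1
      have hcomp : bu ∘ Equiv.swap k l = Function.update b' l u := by
        rw [hbu, hb', update_comp_swap]
      rw [hcomp] at this
      exact this
    -- now compare the two payment formulas
    have hp1 := hpay b hbpos k
    have hp2 := hpay b' hb'pos l
    rw [hbv, hbk] at hp1
    rw [hb'v, hb'l] at hp2
    rw [hp1, hp2, hwEq, hIeq] at hpEq
    -- hpEq : h l v + t * w b k - I = h k v + t * w b k - I
    linarith [hpEq]
  intro i v hv
  induction i using Fin.induction with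
  | zero => rfl
  | succ j ih => rw [← key j v hv]; exact ih
end

section
/- If a mechanism (w,p) is truthful, envy-free, and anonymous with common payment function h, then for all bid vectors t and all machines i, j: h(t_{-i}) − h(t_{-j}) ≤ L·t_i + (t_j − t_i)·w_i(t), where L is the total length of all jobs. -/
open MeasureTheory

/-- If a mechanism `(w, p)` is truthful, envy-free and anonymous with common payment
function `h`, then for all positive bid vectors `t` and machines `i, j`,
`h(t₋ᵢ) − h(t₋ⱼ) ≤ L·tᵢ + (tⱼ − tᵢ)·wᵢ(t)`, where `L` is the total job length. -/
theorem envy_free_h_inequality (n : ℕ) (L : ℝ)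
    (w p : (Fin (n + 1) → ℝ) → Fin (n + 1) → ℝ)
    (h : (Fin n → ℝ) → ℝ)
    -- workloads lie between 0 and the total job length L
    (hrange : ∀ b : Fin (n + 1) → ℝ, (∀ j, 0 < b j) → ∀ i,
      0 ≤ w b i ∧ w b i ≤ L)
    -- truthful payments with common h (anonymity)
    (hpay : ∀ b : Fin (n + 1) → ℝ, (∀ j, 0 < b j) → ∀ i,
      p b i = h (b ∘ i.succAbove) + b i * w b i -
        ∫ x in Set.Ioc (0 : ℝ) (b i), w (Function.update b i x) i)
    -- envy-freeness: machine j does not envy machine i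
    (hEF : ∀ b : Fin (n + 1) → ℝ, (∀ j, 0 < b j) → ∀ i j,
      p b i - b j * w b i ≤ p b j - b j * w b j) :
    ∀ t : Fin (n + 1) → ℝ, (∀ j, 0 < t j) → ∀ i j,
      h (t ∘ i.succAbove) - h (t ∘ j.succAbove) ≤ L * t i + (t j - t i) * w t i := by
  intro t ht i j
  have hL : 0 ≤ L := le_trans (hrange t ht i).1 (hrange t ht i).2
  have hEFij := hEF t ht i j
  rw [hpay t ht i, hpay t ht j] at hEFij
  -- positivity of updated bids
  have hupd : ∀ (k : Fin (n + 1)) (x : ℝ), x ∈ Set.Ioc (0 : ℝ) (t k) →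
      ∀ m, 0 < Function.update t k x m := by
    intro k x hx m
    rcases eq_or_ne m k with rfl | hm
    · simpa using hx.1
    · simpa [Function.update_of_ne hm] using ht m
  -- integral over j's interval is nonnegative
  have hIj : 0 ≤ ∫ x in Set.Ioc (0 : ℝ) (t j), w (Function.update t j x) j := by
    apply setIntegral_nonneg measurableSet_Ioc
    intro x hx
    exact (hrange _ (hupd j x hx) j).1
  -- integral over i's interval is at most L * t i
  have hIi : (∫ x in Set.Ioc (0 : ℝ) (t i), w (Function.update t i x) i) ≤ L * t i := by
    by_cases hint : IntegrableOn (fun x => w (Function.update t i x) i)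
        (Set.Ioc (0 : ℝ) (t i)) volume
    · have hconst : (∫ _ in Set.Ioc (0 : ℝ) (t i), L) = L * t i := by
        rw [setIntegral_const]
        rw [Real.volume_real_Ioc_of_le (le_of_lt (by simpa using ht i))]
        rw [smul_eq_mul]; ring
      calc (∫ x in Set.Ioc (0 : ℝ) (t i), w (Function.update t i x) i)
          ≤ ∫ _ in Set.Ioc (0 : ℝ) (t i), L := by
            apply setIntegral_mono_on hint (integrableOn_const (by
              rw [Real.volume_Ioc]; exact ENNReal.ofReal_ne_top)) measurableSet_Ioc
            intro x hx
            exact (hrange _ (hupd i x hx) i).2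
        _ = L * t i := hconst
    · rw [integral_undef hint]
      exact mul_nonneg hL (le_of_lt (ht i))
  nlinarith [hEFij, hIj, hIi]
end

section
/- Let M = (w,p) be a deterministic, truthful, envy-free, individually rational, and anonymous mechanism for Q||C_max on m machines. Then M is not c-approximate for any c < 2 − 1/m. -/
/-- A deterministic, truthful, envy-free, individually rational and anonymous mechanism
for `Q||C_max` on `m` machines cannot be `c`-approximate for any `c < 2 − 1/m`. -/
theorem lower_bound_anonymous_mechanisms (m : ℕ) (hm : 2 ≤ m) (c : ℝ)
    -- the mechanism: for each instance (jobs l), an assignment of jobs to machines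
    (A : (n : ℕ) → (Fin n → ℝ) → (Fin m → ℝ) → Fin n → Fin m)
    -- payments
    (p : (n : ℕ) → (Fin n → ℝ) → (Fin m → ℝ) → Fin m → ℝ)
    -- workloads induced by the assignment
    (W : (n : ℕ) → (Fin n → ℝ) → (Fin m → ℝ) → Fin m → ℝ)
    (hW : ∀ (n : ℕ) (l : Fin n → ℝ) (b : Fin m → ℝ) (i : Fin m),
      W n l b i = ∑ j ∈ Finset.univ.filter (fun j => A n l b j = i), l j)
    -- truthfulness: bidding the true speed maximizes utility
    (htruth : ∀ (n : ℕ) (l : Fin n → ℝ) (b : Fin m → ℝ),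
      (∀ j, 0 < l j) → (∀ i, 0 < b i) → ∀ (i : Fin m) (b' : ℝ), 0 < b' →
      p n l (Function.update b i b') i - b i * W n l (Function.update b i b') i ≤
        p n l b i - b i * W n l b i)
    -- individual rationality
    (hIR : ∀ (n : ℕ) (l : Fin n → ℝ) (b : Fin m → ℝ),
      (∀ j, 0 < l j) → (∀ i, 0 < b i) → ∀ i : Fin m,
      0 ≤ p n l b i - b i * W n l b i)
    -- envy-freeness
    (hEF : ∀ (n : ℕ) (l : Fin n → ℝ) (b : Fin m → ℝ),
      (∀ j, 0 < l j) → (∀ i, 0 < b i) → ∀ i k : Fin m,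
      p n l b k - b i * W n l b k ≤ p n l b i - b i * W n l b i)
    -- anonymity: swapping a unique bid with another machine's bid swaps
    -- workload and payment
    (hanon : ∀ (n : ℕ) (l : Fin n → ℝ) (b : Fin m → ℝ),
      (∀ j, 0 < l j) → (∀ i, 0 < b i) → ∀ k i : Fin m,
      (∀ j, j ≠ k → b j ≠ b k) → i ≠ k →
      W n l (b ∘ Equiv.swap k i) i = W n l b k ∧
        p n l (b ∘ Equiv.swap k i) i = p n l b k)
    -- c-approximation: the mechanism's makespan is at most c times the makespan of
    -- any assignment f (hence at most c times the optimum)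
    (happrox : ∀ (n : ℕ) (l : Fin n → ℝ) (b : Fin m → ℝ),
      (∀ j, 0 < l j) → (∀ i, 0 < b i) → ∀ (f : Fin n → Fin m) (i : Fin m),
      b i * W n l b i ≤
        c * Finset.univ.sup' (Finset.univ_nonempty_iff.mpr ⟨⟨0, by omega⟩⟩)
          (fun i' => b i' * ∑ j ∈ Finset.univ.filter (fun j => f j = i'), l j))
    (hc : c < 2 - 1 / (m : ℝ)) : False := by
  have hm0 : (0:ℝ) < (m:ℝ) := by
    have : 0 < m := by omega
    exact_mod_cast this
  have hc2 : c < 2 := by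
    have h1 : 0 < 1 / (m:ℝ) := by positivity
    linarith
  set l : Fin m → ℝ := fun _ => 1 with hl_def
  have hl : ∀ j : Fin m, 0 < l j := fun j => one_pos
  set γ : ℝ := max c 1 with hγdef
  have hγ1 : 1 ≤ γ := le_max_right _ _
  have hγ2 : γ < 2 := max_lt hc2 one_lt_two
  have hγpos : 0 < γ := lt_of_lt_of_le one_pos hγ1
  set ρ : ℝ := (γ + 2) / (2 * γ) with hρdef
  have hρpos : 0 < ρ := by positivity
  have hρ1 : 1 < ρ := by
    rw [hρdef, lt_div_iff₀ (by positivity)]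
    linarith
  have hγρ : γ * ρ = (γ + 2) / 2 := by
    rw [hρdef]
    field_simp
  have hcρ : c * ρ < 2 := by
    have h1 : c * ρ ≤ γ * ρ := mul_le_mul_of_nonneg_right (le_max_left c 1) (le_of_lt hρpos)
    rw [hγρ] at h1
    linarith
  have hm' : 0 < m := by omega
  let i0 : Fin m := ⟨0, hm'⟩
  -- KEY 1: on any profile whose bids lie in a window [s, ρ·s], every machine gets exactly one job
  have key1 : ∀ (s : ℝ) (b : Fin m → ℝ), 0 < s → (∀ i, s ≤ b i) → (∀ i, b i ≤ ρ * s) →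
      ∀ i, W m l b i = 1 := by
    intro s b hs hlb hub
    have hbpos : ∀ i, 0 < b i := fun i => lt_of_lt_of_le hs (hlb i)
    have hWcard : ∀ i, W m l b i =
        ((Finset.univ.filter (fun j => A m l b j = i)).card : ℝ) := by
      intro i
      rw [hW]
      simp [hl_def]
    have hsum : ∑ i : Fin m, (Finset.univ.filter (fun j => A m l b j = i)).card = m := by
      have h := Finset.card_eq_sum_card_fiberwise
        (f := A m l b) (s := Finset.univ) (t := Finset.univ) (fun x _ => Finset.mem_univ _)
      simpa using h.symm
    have hle1 : ∀ i, (Finset.univ.filter (fun j => A m l b j = i)).card ≤ 1 := by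
      intro i
      by_contra hcon
      push_neg at hcon
      have h2 : (2:ℝ) ≤ ((Finset.univ.filter (fun j => A m l b j = i)).card : ℝ) := by
        exact_mod_cast hcon
      have hload : 2 * s ≤ b i * W m l b i := by
        rw [hWcard i]
        nlinarith [hlb i, hs]
      have happ := happrox m l b hl hbpos (fun j => j) i
      have hsum' : ∀ i' : Fin m,
          (∑ j ∈ Finset.univ.filter (fun j => (fun (j : Fin m) => j) j = i'), l j) = 1 := by
        intro i'
        simp [Finset.filter_eq', hl_def]
      simp only [hsum', mul_one] at happ
      have hmain : ∀ S : ℝ, s ≤ S → S ≤ ρ * s → 2 * s ≤ c * S → False := by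
        intro S h1 h2 h3
        rcases le_or_gt c 0 with hc0 | hc0
        · nlinarith
        · nlinarith
      exact hmain _ (le_trans (hlb i0) (Finset.le_sup' b (Finset.mem_univ i0)))
        (Finset.sup'_le _ b fun i' _ => hub i') (le_trans hload happ)
    have hall : ∀ i, (Finset.univ.filter (fun j => A m l b j = i)).card = 1 := by
      intro i
      by_contra hne
      have h0 : (Finset.univ.filter (fun j => A m l b j = i)).card < 1 :=
        lt_of_le_of_ne (hle1 i) hne
      have hlt : (∑ i : Fin m, (Finset.univ.filter (fun j => A m l b j = i)).card) <
          ∑ _i : Fin m, 1 :=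
        Finset.sum_lt_sum (fun i _ => hle1 i) ⟨i, Finset.mem_univ i, h0⟩
      simp only [Finset.sum_const, Finset.card_univ, Fintype.card_fin, smul_eq_mul,
        mul_one] at hlt
      omega
    intro i
    rw [hWcard i, hall i]
    norm_num
  -- KEY 2: when all workloads are 1, envy-freeness forces all payments equal
  have key2 : ∀ (b : Fin m → ℝ), (∀ i, 0 < b i) → (∀ i, W m l b i = 1) →
      ∀ i k : Fin m, p m l b i = p m l b k := by
    intro b hb hW1 i k
    have h1 := hEF m l b hl hb i k
    have h2 := hEF m l b hl hb k i
    rw [hW1 i, hW1 k] at h1 h2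
    linarith
  -- KEY 3: truthfulness makes the payment of a machine invariant when it moves its bid,
  -- provided its workload stays 1
  have key3 : ∀ (b : Fin m → ℝ) (i : Fin m) (x' : ℝ), (∀ k, 0 < b k) → 0 < x' →
      W m l b i = 1 → W m l (Function.update b i x') i = 1 →
      p m l (Function.update b i x') i = p m l b i := by
    intro b i x' hb hx' hw hw'
    have hb' : ∀ k, 0 < Function.update b i x' k := by
      intro k
      rcases eq_or_ne k i with rfl | hk
      · simpa using hx'
      · rw [Function.update_of_ne hk]
        exact hb k
    have t1 := htruth m l b hl hb i x' hx'
    have t2 := htruth m l (Function.update b i x') hl hb' i (b i) (hb i)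
    rw [Function.update_idem, Function.update_eq_self, Function.update_self] at t2
    rw [hw, hw'] at t1
    rw [hw, hw'] at t2
    linarith
  -- one scaling step: common payment is preserved from the all-s profile to the all-(ρs) profile
  have step : ∀ s : ℝ, 0 < s →
      p m l (fun _ => ρ * s) i0 = p m l (fun _ => s) i0 := by
    intro s hs
    have hρs : s ≤ ρ * s := by nlinarith
    set q : ℕ → Fin m → ℝ := fun t i => if (i : ℕ) < t then ρ * s else s with hqdef
    have hq0 : q 0 = fun _ => s := by
      funext i
      simp [hqdef]
    have hqm : q m = fun _ => ρ * s := by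
      funext i
      simp [hqdef, i.isLt]
    have hbounds : ∀ t i, s ≤ q t i ∧ q t i ≤ ρ * s := by
      intro t i
      constructor <;> simp only [hqdef] <;> split <;> linarith
    have hqpos : ∀ t i, 0 < q t i := fun t i => lt_of_lt_of_le hs (hbounds t i).1
    have hqW : ∀ t i, W m l (q t) i = 1 := fun t =>
      key1 s (q t) hs (fun i => (hbounds t i).1) (fun i => (hbounds t i).2)
    have hstep : ∀ t, (ht : t < m) →
        p m l (q (t+1)) i0 = p m l (q t) i0 := by
      intro t ht
      have hupdate : q (t+1) = Function.update (q t) ⟨t, ht⟩ (ρ * s) := by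
        funext i
        rcases eq_or_ne i ⟨t, ht⟩ with rfl | hne
        · rw [Function.update_self]
          simp [hqdef]
        · rw [Function.update_of_ne hne]
          have hvne : (i : ℕ) ≠ t := fun h => hne (Fin.ext h)
          simp only [hqdef]
          by_cases hlt : (i : ℕ) < t
          · rw [if_pos hlt, if_pos (by omega)]
          · rw [if_neg hlt, if_neg (by omega)]
      calc p m l (q (t+1)) i0 = p m l (q (t+1)) ⟨t, ht⟩ :=
            key2 (q (t+1)) (hqpos (t+1)) (hqW (t+1)) i0 ⟨t, ht⟩
        _ = p m l (q t) ⟨t, ht⟩ := by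
            rw [hupdate]
            refine key3 (q t) ⟨t, ht⟩ (ρ * s) (hqpos t) (by positivity) (hqW t _) ?_
            rw [← hupdate]
            exact hqW (t+1) _
        _ = p m l (q t) i0 := key2 (q t) (hqpos t) (hqW t) ⟨t, ht⟩ i0
    have hiter : ∀ t, t ≤ m → p m l (q t) i0 = p m l (q 0) i0 := by
      intro t
      induction t with
      | zero => intro _; rfl
      | succ t ih =>
          intro ht
          rw [hstep t (by omega), ih (by omega)]
    have hfin := hiter m le_rfl
    rw [hq0, hqm] at hfin
    exact hfin
  -- iterate: the common payment at the all-(ρ^N) profile equals that at the all-1 profile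
  have scale : ∀ N : ℕ, p m l (fun _ => ρ ^ N) i0 = p m l (fun _ => (1:ℝ)) i0 := by
    intro N
    induction N with
    | zero => simp only [pow_zero]
    | succ N ih =>
        have h := step (ρ ^ N) (by positivity)
        have e : (fun _ : Fin m => ρ ^ (N+1)) = (fun _ : Fin m => ρ * ρ ^ N) := by
          funext _
          rw [pow_succ]
          ring
        rw [e, h, ih]
  -- individual rationality at scale ρ^N forces the common payment to be at least ρ^N
  have hIRs : ∀ N : ℕ, (ρ:ℝ) ^ N ≤ p m l (fun _ => (1:ℝ)) i0 := by
    intro N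
    have hpos : ∀ i : Fin m, (0:ℝ) < (fun _ : Fin m => ρ ^ N) i := fun _ => by positivity
    have h := hIR m l (fun _ => ρ ^ N) hl hpos i0
    have hw := key1 (ρ ^ N) (fun _ => ρ ^ N) (by positivity) (fun _ => le_rfl)
      (fun _ => by nlinarith [pow_pos hρpos N])
    rw [hw i0] at h
    rw [← scale N]
    linarith
  obtain ⟨N, hN⟩ := pow_unbounded_of_one_lt (p m l (fun _ => (1:ℝ)) i0) hρ1
  exact absurd (hIRs N) (not_le.mpr hN)
end

section
/- Let w be a scalable allocation for 2 machines with total job length L, i.e., w(cb₁, cb₂) = w(b₁, b₂) componentwise for all c > 0, where w(x,a) denotes the workload of the machine bidding x against a machine bidding a. Fix k > 1 and a > 0, and suppose w(x,a) > 0 for all 0 < x < ka. Then there exists g(k) > 0, depending only on k and w, such that ∫_a^{ka} w(x,a) dx ≥ ∫_{a/k}^a w(a,x) dx + g(k)·a. Concretely one may take g(k) = (4k²/(k+1)² − 1)·∫_{1/k}^{(k+1)/(2k)} w(1,y) dy. -/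
open MeasureTheory

set_option maxHeartbeats 1000000 in
/-- For a scalable two-machine allocation `w` with values in `[0, L]`, if `k > 1`,
`a > 0` and `w(x, a) > 0` for all `0 < x < k·a`, then with
`g(k) = (4k²/(k+1)² − 1)·∫_{1/k}^{(k+1)/(2k)} w(1, y) dy > 0` we have
`∫_a^{ka} w(x, a) dx ≥ ∫_{a/k}^a w(a, x) dx + g(k)·a`. -/
theorem scalable_integral_lemma (L : ℝ) (hL : 0 < L) (w : ℝ → ℝ → ℝ)
    (hmeas : Measurable (Function.uncurry w))
    (hrange : ∀ x a : ℝ, 0 < x → 0 < a → 0 ≤ w x a ∧ w x a ≤ L)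
    (hscale : ∀ c x a : ℝ, 0 < c → 0 < x → 0 < a → w (c * x) (c * a) = w x a)
    (k : ℝ) (hk : 1 < k) (a : ℝ) (ha : 0 < a)
    (hpos : ∀ x : ℝ, 0 < x → x < k * a → 0 < w x a) :
    0 < (4 * k ^ 2 / (k + 1) ^ 2 - 1) *
        ∫ y in Set.Ioc (1 / k) ((k + 1) / (2 * k)), w 1 y ∧
    (∫ x in Set.Ioc (a / k) a, w a x) +
        ((4 * k ^ 2 / (k + 1) ^ 2 - 1) *
          ∫ y in Set.Ioc (1 / k) ((k + 1) / (2 * k)), w 1 y) * a ≤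
      ∫ x in Set.Ioc a (k * a), w x a := by
  have hk0 : (0:ℝ) < k := lt_trans one_pos hk
  set m : ℝ := (k + 1) / (2 * k) with hm
  set C : ℝ := 4 * k ^ 2 / (k + 1) ^ 2 - 1 with hC
  have hikm : 1 / k < m := by
    rw [hm, div_lt_div_iff₀ hk0 (by linarith)]
    nlinarith
  have hm1 : m < 1 := by
    rw [hm, div_lt_one (by linarith)]; linarith
  have hik0 : (0:ℝ) < 1 / k := by positivity
  have hfm : Measurable (w 1) := hmeas.of_uncurry_left
  -- basic pointwise facts about f := w 1 on (0, ∞)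
  have hf_nonneg : ∀ u : ℝ, 0 < u → 0 ≤ w 1 u := fun u hu => (hrange 1 u one_pos hu).1
  have hf_le : ∀ u : ℝ, 0 < u → w 1 u ≤ L := fun u hu => (hrange 1 u one_pos hu).2
  have hkey : ∀ u : ℝ, 0 < u → w (a / u) a = w 1 u := by
    intro u hu0
    have h1 : w ((a / u) * 1) ((a / u) * u) = w 1 u := hscale (a / u) 1 u (by positivity) one_pos hu0
    have h2 : (a / u) * 1 = a / u := mul_one _
    have h3 : (a / u) * u = a := div_mul_cancel₀ a hu0.ne'
    rw [h2, h3] at h1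
    exact h1
  have hkey2 : ∀ u : ℝ, 0 < u → w a (a * u) = w 1 u := by
    intro u hu0
    have h1 : w (a * 1) (a * u) = w 1 u := hscale a 1 u ha one_pos hu0
    rwa [mul_one] at h1
  have hf_pos : ∀ u : ℝ, 1 / k < u → u ≤ 1 → 0 < w 1 u := by
    intro u hu hu1
    have hu0 : 0 < u := lt_trans hik0 hu
    rw [← hkey u hu0]
    apply hpos (a / u) (by positivity)
    rw [div_lt_iff₀ hu0]
    calc a = k * a * (1 / k) := by field_simp
    _ < k * a * u := by
        exact mul_lt_mul_of_pos_left hu (by positivity)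
  -- C > 0
  have hCpos : 0 < C := by
    rw [hC, sub_pos, lt_div_iff₀ (by positivity)]
    nlinarith
  -- integrability machinery
  have hIooSub : Set.Ioc (1 / k) m ⊆ Set.Ioo (1 / k) (1:ℝ) := fun u hu =>
    ⟨hu.1, lt_of_le_of_lt hu.2 hm1⟩
  have hbdd : ∀ g : ℝ → ℝ, Measurable g → (∃ M, ∀ u ∈ Set.Ioo (1/k:ℝ) 1, ‖g u‖ ≤ M) →
      IntegrableOn g (Set.Ioo (1/k:ℝ) 1) := by
    rintro g hg ⟨M, hM⟩
    exact Measure.integrableOn_of_bounded measure_Ioo_lt_top.ne hg.aestronglyMeasurable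
      ((ae_restrict_iff' measurableSet_Ioo).2 (ae_of_all _ hM))
  have habs : ∀ u ∈ Set.Ioo (1/k:ℝ) 1, ‖w 1 u‖ ≤ L := by
    intro u hu
    have hu0 : 0 < u := lt_trans hik0 hu.1
    rw [Real.norm_eq_abs, abs_of_nonneg (hf_nonneg u hu0)]
    exact hf_le u hu0
  have hintf : IntegrableOn (w 1) (Set.Ioo (1/k:ℝ) 1) := hbdd _ hfm ⟨L, habs⟩
  have hint1 : IntegrableOn (fun u => a * w 1 u) (Set.Ioo (1/k:ℝ) 1) := hintf.const_mul a
  have hmeas2 : Measurable (fun u : ℝ => (a / u ^ 2) * w 1 u) :=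
    (measurable_const.div (measurable_id.pow_const 2)).mul hfm
  have hint2 : IntegrableOn (fun u => (a / u ^ 2) * w 1 u) (Set.Ioo (1/k:ℝ) 1) := by
    apply hbdd _ hmeas2
    refine ⟨a * k ^ 2 * L, fun u hu => ?_⟩
    have hu0 : 0 < u := lt_trans hik0 hu.1
    have hku : 1 ≤ k * u := by
      have h := (div_lt_iff₀ hk0).1 hu.1
      nlinarith
    have h1 : a / u ^ 2 ≤ a * k ^ 2 := by
      rw [div_le_iff₀ (by positivity)]
      nlinarith [mul_nonneg ha.le (mul_nonneg (sub_nonneg.2 hku)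
        (by positivity : (0:ℝ) ≤ k * u + 1))]
    rw [Real.norm_eq_abs, abs_mul, abs_of_nonneg (le_of_lt (show (0:ℝ) < a / u^2 by positivity)),
      abs_of_nonneg (hf_nonneg u hu0)]
    have h2 := hf_le u hu0
    have h3 := hf_nonneg u hu0
    exact mul_le_mul h1 h2 h3 (by positivity)
  -- change of variables: the integral over Ioc (a/k) a
  have e1 : (∫ x in Set.Ioc (a / k) a, w a x) = ∫ u in Set.Ioo (1/k:ℝ) 1, a * w 1 u := by
    rw [integral_Ioc_eq_integral_Ioo]
    have himg : (fun u : ℝ => a * u) '' Set.Ioo (1/k) 1 = Set.Ioo (a / k) a := by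
      rw [Set.image_mul_left_Ioo ha, mul_one, mul_one_div]
    rw [← himg, integral_image_eq_integral_abs_deriv_smul (f' := fun _ => a) measurableSet_Ioo
      (fun x _ => by simpa using ((hasDerivAt_id x).const_mul a).hasDerivWithinAt)
      (fun u _ v _ h => mul_left_cancel₀ ha.ne' h)]
    apply setIntegral_congr_fun measurableSet_Ioo
    intro u hu
    have hu0 : 0 < u := lt_trans hik0 hu.1
    simp only [smul_eq_mul]
    rw [abs_of_pos ha, hkey2 u hu0]
  -- change of variables: the integral over Ioc a (k*a)
  have e2 : (∫ x in Set.Ioc a (k * a), w x a) = ∫ u in Set.Ioo (1/k:ℝ) 1, (a / u ^ 2) * w 1 u := by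
    rw [integral_Ioc_eq_integral_Ioo]
    have himg : (fun u : ℝ => a / u) '' Set.Ioo (1/k) 1 = Set.Ioo a (k * a) := by
      ext x
      constructor
      · rintro ⟨u, ⟨hu1, hu2⟩, rfl⟩
        have hu0 : 0 < u := lt_trans hik0 hu1
        constructor
        · rw [lt_div_iff₀ hu0]; nlinarith
        · rw [div_lt_iff₀ hu0]
          calc a = k * a * (1/k) := by field_simp
          _ < k * a * u := mul_lt_mul_of_pos_left hu1 (by positivity)
      · rintro ⟨hx1, hx2⟩
        have hx0 : 0 < x := lt_trans ha hx1
        refine ⟨a / x, ⟨?_, ?_⟩, ?_⟩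
        · rw [div_lt_div_iff₀ hk0 hx0]; linarith
        · rw [div_lt_one hx0]; exact hx1
        · field_simp
    rw [← himg, integral_image_eq_integral_abs_deriv_smul (f' := fun u => -(a / u ^ 2))
      measurableSet_Ioo
      (fun u hu => by
        have hu0 : 0 < u := lt_trans hik0 hu.1
        have h := (hasDerivAt_inv hu0.ne').const_mul a
        have h2 : HasDerivAt (fun y : ℝ => a / y) (-(a / u ^ 2)) u := by
          simpa [div_eq_mul_inv, mul_neg] using h
        exact h2.hasDerivWithinAt)
      (fun u hu v hv h => by
        have hu0 : (0:ℝ) < u := lt_trans hik0 hu.1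
        have hv0 : (0:ℝ) < v := lt_trans hik0 hv.1
        have h' : a / u = a / v := h
        rw [div_eq_div_iff hu0.ne' hv0.ne'] at h'
        exact (mul_left_cancel₀ ha.ne' h').symm)]
    apply setIntegral_congr_fun measurableSet_Ioo
    intro u hu
    have hu0 : 0 < u := lt_trans hik0 hu.1
    simp only [smul_eq_mul]
    rw [hkey u hu0, abs_neg, abs_of_pos (show (0:ℝ) < a / u^2 by positivity)]
  -- positivity of the integral G
  have hGpos : 0 < ∫ y in Set.Ioc (1 / k) m, w 1 y := by
    rw [setIntegral_pos_iff_support_of_nonneg_ae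
      ((ae_restrict_iff' measurableSet_Ioc).2 (ae_of_all _
        (fun u hu => hf_nonneg u (lt_trans hik0 hu.1))))
      (hintf.mono_set hIooSub)]
    refine lt_of_lt_of_le ?_ (measure_mono (Set.subset_inter
      (fun u hu => ne_of_gt (hf_pos u hu.1 (hu.2.trans hm1.le))) Set.Subset.rfl))
    rw [Real.volume_Ioc]
    exact ENNReal.ofReal_pos.mpr (by linarith)
  refine ⟨mul_pos hCpos hGpos, ?_⟩
  rw [e1, e2]
  -- difference function
  set G : ℝ := ∫ y in Set.Ioc (1 / k) m, w 1 y with hG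
  have hsub : (∫ u in Set.Ioo (1/k:ℝ) 1, ((a / u ^ 2) * w 1 u - a * w 1 u)) =
      (∫ u in Set.Ioo (1/k:ℝ) 1, (a / u ^ 2) * w 1 u) -
      (∫ u in Set.Ioo (1/k:ℝ) 1, a * w 1 u) := integral_sub hint2 hint1
  have hunion : Set.Ioc (1/k:ℝ) m ∪ Set.Ioo m 1 = Set.Ioo (1/k:ℝ) 1 :=
    Set.Ioc_union_Ioo_eq_Ioo hikm.le hm1
  have hdisj : Disjoint (Set.Ioc (1/k:ℝ) m) (Set.Ioo m 1) :=
    Set.disjoint_left.mpr (fun u hu hu' => absurd hu.2 (not_le.mpr hu'.1))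
  have hD : IntegrableOn (fun u => (a / u ^ 2) * w 1 u - a * w 1 u) (Set.Ioo (1/k:ℝ) 1) :=
    hint2.sub hint1
  have hsplit : (∫ u in Set.Ioo (1/k:ℝ) 1, ((a / u ^ 2) * w 1 u - a * w 1 u)) =
      (∫ u in Set.Ioc (1/k:ℝ) m, ((a / u ^ 2) * w 1 u - a * w 1 u)) +
      (∫ u in Set.Ioo m 1, ((a / u ^ 2) * w 1 u - a * w 1 u)) := by
    rw [← hunion, setIntegral_union hdisj measurableSet_Ioo
      (hD.mono_set (by rw [← hunion]; exact Set.subset_union_left))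
      (hD.mono_set (by rw [← hunion]; exact Set.subset_union_right))]
  have hbnd1 : C * a * G ≤ ∫ u in Set.Ioc (1/k:ℝ) m, ((a / u ^ 2) * w 1 u - a * w 1 u) := by
    have h1 : (∫ u in Set.Ioc (1/k:ℝ) m, C * a * w 1 u) = C * a * G := by
      rw [hG, integral_const_mul]
    rw [← h1]
    apply setIntegral_mono_on ((hintf.mono_set hIooSub).const_mul (C * a))
      (hD.mono_set hIooSub) measurableSet_Ioc
    intro u hu
    have hu0 : 0 < u := lt_trans hik0 hu.1
    have hum : u ≤ m := hu.2
    have hm0 : 0 < m := lt_trans hik0 hikm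
    have h2 : a * (C + 1) ≤ a / u ^ 2 := by
      have h3 : a / m ^ 2 ≤ a / u ^ 2 :=
        div_le_div_of_nonneg_left ha.le (by positivity) (by nlinarith)
      have h4 : a / m ^ 2 = a * (C + 1) := by
        rw [hC, hm, div_eq_iff (by positivity : ((k+1)/(2*k))^2 ≠ 0)]
        have hk1 : (k + 1) ≠ 0 := by positivity
        field_simp
        ring
      linarith
    have h5 := hf_nonneg u hu0
    nlinarith [mul_nonneg (sub_nonneg.2 h2) h5]
  have hbnd2 : 0 ≤ ∫ u in Set.Ioo m 1, ((a / u ^ 2) * w 1 u - a * w 1 u) := by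
    apply setIntegral_nonneg measurableSet_Ioo
    intro u hu
    have hm0 : 0 < m := lt_trans hik0 hikm
    have hu0 : 0 < u := lt_trans hm0 hu.1
    have h2 : a ≤ a / u ^ 2 := by
      rw [le_div_iff₀ (by positivity)]
      nlinarith [mul_nonneg (mul_nonneg ha.le (sub_nonneg.2 hu.2.le))
        (by positivity : (0:ℝ) ≤ 1 + u)]
    have h5 := hf_nonneg u hu0
    nlinarith [mul_nonneg (sub_nonneg.2 h2) h5]
  have : C * a * G ≤ (∫ u in Set.Ioo (1/k:ℝ) 1, (a / u ^ 2) * w 1 u) -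
      (∫ u in Set.Ioo (1/k:ℝ) 1, a * w 1 u) := by
    rw [← hsub, hsplit]; linarith
  linarith [this]
end

section
/- Let M = (w,p) be a deterministic, truthful, envy-free, individually rational, and anonymous mechanism for two machines, and suppose the allocation w is scalable. Then for any two machines with distinct speeds, w allocates the entire workload L to the faster machine (the one with the smaller speed value). -/
open MeasureTheory

/-- One-dimensional change of variables for lower Lebesgue integrals. -/
lemma aux_lintegral_image {s : Set ℝ} {f f' : ℝ → ℝ}
    (hs : MeasurableSet s) (hf' : ∀ x ∈ s, HasDerivWithinAt f (f' x) s x)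
    (hf : Set.InjOn f s) (g : ℝ → ENNReal) :
    ∫⁻ x in f '' s, g x = ∫⁻ x in s, ENNReal.ofReal |f' x| * g (f x) := by
  simpa only [ContinuousLinearMap.det_toSpanSingleton] using
    MeasureTheory.lintegral_image_eq_lintegral_abs_det_fderiv_mul volume hs
      (fun x hx => (hf' x hx).hasFDerivWithinAt) hf g

lemma aux_image_const_mul (c : ℝ) (hc : 0 < c) :
    (fun x : ℝ => c * x) '' Set.Ioi 0 = Set.Ioi 0 := by
  ext y
  simp only [Set.mem_image, Set.mem_Ioi]
  constructor
  · rintro ⟨x, hx, rfl⟩; positivity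
  · intro hy; exact ⟨c⁻¹ * y, by positivity, by field_simp⟩

lemma aux_image_inv : (fun x : ℝ => x⁻¹) '' Set.Ioi 1 = Set.Ioo 0 1 := by
  ext y
  simp only [Set.mem_image, Set.mem_Ioi, Set.mem_Ioo]
  constructor
  · rintro ⟨x, hx, rfl⟩
    exact ⟨by positivity, inv_lt_one_of_one_lt₀ hx⟩
  · rintro ⟨h0, h1⟩
    exact ⟨y⁻¹, (one_lt_inv₀ h0).2 h1, inv_inv y⟩

/-- For two machines, any deterministic, truthful, envy-free, individually rational and
anonymous mechanism whose allocation is scalable must allocate the entire workload `L`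
to the quicker machine whenever the two speeds differ. -/
theorem scalable_two_machine_characterization (L : ℝ) (hL : 0 < L)
    (w : ℝ → ℝ → ℝ) (p : ℝ → ℝ → ℝ) (h : ℝ → ℝ)
    (hmeas : Measurable (Function.uncurry w))
    (hrange : ∀ x a : ℝ, 0 < x → 0 < a → 0 ≤ w x a ∧ w x a ≤ L)
    -- the two workloads sum to L (anonymity: the other machine gets w(a, x))
    (hsum : ∀ x a : ℝ, 0 < x → 0 < a → w x a + w a x = L)
    -- scalability
    (hscale : ∀ c x a : ℝ, 0 < c → 0 < x → 0 < a → w (c * x) (c * a) = w x a)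
    -- monotone nonincreasing in one's own bid (truthfulness)
    (hmono : ∀ a : ℝ, 0 < a → ∀ x y : ℝ, 0 < x → x ≤ y → w y a ≤ w x a)
    -- truthful payments
    (hpay : ∀ x a : ℝ, 0 < x → 0 < a →
      p x a = h a + x * w x a - ∫ u in Set.Ioc (0 : ℝ) x, w u a)
    -- individual rationality
    (hIR : ∀ a : ℝ, 0 < a →
      (∫⁻ u in Set.Ioi (0 : ℝ), ENNReal.ofReal (w u a)) ≤ ENNReal.ofReal (h a))
    -- envy-freeness: the machine bidding x does not envy the machine bidding a
    (hEF : ∀ x a : ℝ, 0 < x → 0 < a → p a x - x * w a x ≤ p x a - x * w x a) :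
    ∀ b₁ b₂ : ℝ, 0 < b₁ → b₁ < b₂ → w b₁ b₂ = L ∧ w b₂ b₁ = 0 := by
  -- measurability of `u ↦ w u c`
  have hwc : ∀ c : ℝ, Measurable fun u => w u c := fun c =>
    hmeas.comp (measurable_id.prodMk measurable_const)
  set g : ℝ → ENNReal := fun u => ENNReal.ofReal (w u 1) with hg_def
  have hg : Measurable g := ENNReal.measurable_ofReal.comp (hwc 1)
  set I : ENNReal := ∫⁻ u in Set.Ioi (0 : ℝ), g u with hI_def
  -- Step A : scaling of the integral
  have scaleJ : ∀ a : ℝ, 0 < a →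
      (∫⁻ u in Set.Ioi (0 : ℝ), ENNReal.ofReal (w u a)) = ENNReal.ofReal a * I := by
    intro a ha
    have hinv : (0:ℝ) < a⁻¹ := by positivity
    have himg := aux_image_const_mul a⁻¹ hinv
    have hderiv : ∀ x ∈ Set.Ioi (0:ℝ),
        HasDerivWithinAt (fun x : ℝ => a⁻¹ * x) a⁻¹ (Set.Ioi 0) x := fun x _ => by
      simpa using ((hasDerivAt_id x).const_mul a⁻¹).hasDerivWithinAt
    have hinj : Set.InjOn (fun x : ℝ => a⁻¹ * x) (Set.Ioi 0) :=
      (mul_right_injective₀ (ne_of_gt hinv)).injOn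
    have key := aux_lintegral_image measurableSet_Ioi hderiv hinj g
    rw [himg] at key
    have congr1 : (∫⁻ x in Set.Ioi (0:ℝ), ENNReal.ofReal |a⁻¹| * g (a⁻¹ * x))
        = ∫⁻ x in Set.Ioi (0:ℝ), ENNReal.ofReal a⁻¹ * ENNReal.ofReal (w x a) := by
      apply setLIntegral_congr_fun measurableSet_Ioi
      intro x hx
      have hxa : w (a⁻¹ * x) 1 = w x a := by
        have := hscale a⁻¹ x a hinv hx ha
        rwa [inv_mul_cancel₀ (ne_of_gt ha)] at this
      rw [abs_of_pos hinv, hg_def]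
      simp [hxa]
    rw [congr1, lintegral_const_mul' _ _ ENNReal.ofReal_ne_top] at key
    rw [← hI_def] at key
    rw [key, ← mul_assoc, ← ENNReal.ofReal_mul (le_of_lt ha),
      mul_inv_cancel₀ (ne_of_gt ha)]
    simp
  -- I is finite
  have hIfin : I ≠ ⊤ := by
    intro hT
    have h1 := hIR 1 one_pos
    rw [show (∫⁻ u in Set.Ioi (0:ℝ), ENNReal.ofReal (w u 1)) = I from rfl, hT] at h1
    exact (ENNReal.ofReal_lt_top.ne (le_antisymm le_top h1)).elim
  -- integrability of w on bounded intervals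
  have hwInt : ∀ b c : ℝ, 0 < c → IntegrableOn (fun u => w u c) (Set.Ioc 0 b) := by
    intro b c hc
    apply Measure.integrableOn_of_bounded (M := L)
    · simp
    · exact (hwc c).aestronglyMeasurable
    · rw [ae_restrict_iff' measurableSet_Ioc]
      filter_upwards with u hu
      have h1 := hrange u c hu.1 hc
      rw [Real.norm_eq_abs, abs_of_nonneg h1.1]; exact h1.2
  -- Step B : envy-freeness bound on h
  have hB : ∀ a : ℝ, 1 < a → h a ≤ h 1 + a * L := by
    intro a ha
    have ha0 : (0:ℝ) < a := lt_trans one_pos ha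
    have hef := hEF a 1 ha0 one_pos
    rw [hpay 1 a one_pos ha0, hpay a 1 ha0 one_pos] at hef
    have hb1 : (∫ u in Set.Ioc (0:ℝ) 1, w u a) ≤ L := by
      have hmle : (∫ u in Set.Ioc (0:ℝ) 1, w u a) ≤ ∫ _u in Set.Ioc (0:ℝ) 1, L := by
        apply setIntegral_mono_on (hwInt 1 a ha0) (integrableOn_const (by simp))
          measurableSet_Ioc
        intro u hu; exact (hrange u a hu.1 ha0).2
      simpa using hmle
    have hb2 : (0:ℝ) ≤ ∫ u in Set.Ioc (0:ℝ) a, w u 1 :=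
      setIntegral_nonneg measurableSet_Ioc fun u hu => (hrange u 1 hu.1 one_pos).1
    have hb3 : (a - 1) * w 1 a ≤ (a - 1) * L :=
      mul_le_mul_of_nonneg_left (hrange 1 a one_pos ha0).2 (by linarith)
    nlinarith [hef]
  -- Step C : I ≤ L
  have hIL : I ≤ ENNReal.ofReal L := by
    have step : ∀ n : ℕ, I ≤ ENNReal.ofReal (h 1 / ((n:ℝ) + 2) + L) := by
      intro n
      set a : ℝ := (n : ℝ) + 2 with ha_def
      have hn0 : (0:ℝ) ≤ (n:ℝ) := Nat.cast_nonneg n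
      have ha1 : (1:ℝ) < a := by rw [ha_def]; linarith
      have ha0 : (0:ℝ) < a := by linarith
      have h1 : ENNReal.ofReal a * I ≤ ENNReal.ofReal (h 1 + a * L) := by
        calc ENNReal.ofReal a * I = _ := (scaleJ a ha0).symm
          _ ≤ ENNReal.ofReal (h a) := hIR a ha0
          _ ≤ _ := ENNReal.ofReal_le_ofReal (hB a ha1)
      have h2 : I = ENNReal.ofReal a⁻¹ * (ENNReal.ofReal a * I) := by
        rw [← mul_assoc, ← ENNReal.ofReal_mul (by positivity),
          inv_mul_cancel₀ (ne_of_gt ha0)]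
        simp
      rw [h2]
      calc ENNReal.ofReal a⁻¹ * (ENNReal.ofReal a * I)
          ≤ ENNReal.ofReal a⁻¹ * ENNReal.ofReal (h 1 + a * L) := mul_le_mul_right h1 _
        _ = ENNReal.ofReal (a⁻¹ * (h 1 + a * L)) :=
            (ENNReal.ofReal_mul (by positivity)).symm
        _ = ENNReal.ofReal (h 1 / a + L) := by
            congr 1
            field_simp
    have htend : Filter.Tendsto (fun n : ℕ => ENNReal.ofReal (h 1 / ((n:ℝ) + 2) + L))
        Filter.atTop (nhds (ENNReal.ofReal (0 + L))) := by
      apply ENNReal.tendsto_ofReal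
      apply Filter.Tendsto.add _ tendsto_const_nhds
      apply Filter.Tendsto.div_atTop tendsto_const_nhds
      exact Filter.tendsto_atTop_add_const_right _ 2 tendsto_natCast_atTop_atTop
    have hfin := ge_of_tendsto' htend step
    rwa [zero_add] at hfin
  -- Step D : substitution x ↦ x⁻¹
  set A : ENNReal := ∫⁻ x in Set.Ioi (1:ℝ), ENNReal.ofReal (w x 1 / x^2) with hA_def
  set B2 : ENNReal := ∫⁻ x in Set.Ioi (1:ℝ), g x with hB2_def
  set C : ENNReal := ∫⁻ x in Set.Ioi (1:ℝ), ENNReal.ofReal (L / x^2) with hC_def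
  have hmA : Measurable fun x : ℝ => ENNReal.ofReal (w x 1 / x ^ 2) :=
    ENNReal.measurable_ofReal.comp ((hwc 1).div (measurable_id.pow_const 2))
  -- C = ofReal L
  have hCL : C = ENNReal.ofReal L := by
    have hint : IntegrableOn (fun x : ℝ => L * x ^ (-2:ℝ)) (Set.Ioi 1) :=
      (integrableOn_Ioi_rpow_of_lt (by norm_num) one_pos).const_mul L
    have heq : Set.EqOn (fun x : ℝ => L * x ^ (-2:ℝ)) (fun x : ℝ => L / x ^ 2)
        (Set.Ioi 1) := by
      intro x hx
      have hx0 : (0:ℝ) < x := lt_trans one_pos hx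
      simp only
      rw [Real.rpow_neg hx0.le, div_eq_mul_inv, ← Real.rpow_natCast x 2]
      norm_num
    have hint2 : IntegrableOn (fun x : ℝ => L / x ^ 2) (Set.Ioi 1) :=
      hint.congr_fun heq measurableSet_Ioi
    have hnn : 0 ≤ᵐ[volume.restrict (Set.Ioi (1:ℝ))] fun x : ℝ => L / x ^ 2 := by
      rw [Filter.EventuallyLE, ae_restrict_iff' measurableSet_Ioi]
      filter_upwards with x hx
      have hx0 : (0:ℝ) < x := lt_trans one_pos hx
      positivity
    rw [hC_def, ← ofReal_integral_eq_lintegral_ofReal hint2 hnn]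
    congr 1
    calc (∫ x in Set.Ioi (1:ℝ), L / x ^ 2)
        = ∫ x in Set.Ioi (1:ℝ), L * x ^ (-2:ℝ) :=
          (setIntegral_congr_fun measurableSet_Ioi heq).symm
      _ = L * ∫ x in Set.Ioi (1:ℝ), x ^ (-2:ℝ) := integral_const_mul L _
      _ = L := by rw [integral_Ioi_rpow_of_lt (by norm_num) one_pos]; norm_num
  -- pointwise domination w/x² ≤ L/x²
  have hle : (fun x : ℝ => ENNReal.ofReal (w x 1 / x^2))
      ≤ᵐ[volume.restrict (Set.Ioi (1:ℝ))] fun x => ENNReal.ofReal (L / x^2) := by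
    rw [Filter.EventuallyLE, ae_restrict_iff' measurableSet_Ioi]
    filter_upwards with x hx
    have hx0 : (0:ℝ) < x := lt_trans one_pos hx
    apply ENNReal.ofReal_le_ofReal
    gcongr
    exact (hrange x 1 hx0 one_pos).2
  have hAC : A ≤ C := lintegral_mono_ae hle
  have hAfin : A ≠ ⊤ := by
    intro hT
    rw [hT, hCL] at hAC
    exact (ENNReal.ofReal_lt_top.ne (le_antisymm le_top hAC)).elim
  -- the substitution identity
  have hB1 : (∫⁻ x in Set.Ioo (0:ℝ) 1, g x) = C - A := by
    have hderiv : ∀ x ∈ Set.Ioi (1:ℝ),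
        HasDerivWithinAt (fun x : ℝ => x⁻¹) (-(x^2)⁻¹) (Set.Ioi 1) x := fun x hx =>
      (hasDerivAt_inv (ne_of_gt (lt_trans one_pos hx))).hasDerivWithinAt
    have hinj : Set.InjOn (fun x : ℝ => x⁻¹) (Set.Ioi 1) :=
      fun x _ y _ hxy => inv_injective hxy
    have key := aux_lintegral_image measurableSet_Ioi hderiv hinj g
    rw [aux_image_inv] at key
    rw [key]
    have congr2 : (∫⁻ x in Set.Ioi (1:ℝ), ENNReal.ofReal |(-(x^2)⁻¹)| * g x⁻¹)
        = ∫⁻ x in Set.Ioi (1:ℝ),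
            (ENNReal.ofReal (L / x^2) - ENNReal.ofReal (w x 1 / x^2)) := by
      apply setLIntegral_congr_fun measurableSet_Ioi
      intro x hx
      have hx0 : (0:ℝ) < x := lt_trans one_pos hx
      have hww : w x⁻¹ 1 = L - w x 1 := by
        have e1 : w 1 x = w x⁻¹ 1 := by
          have e := hscale x x⁻¹ 1 hx0 (by positivity) one_pos
          rwa [mul_inv_cancel₀ (ne_of_gt hx0), mul_one] at e
        have e2 := hsum 1 x one_pos hx0
        linarith
      rw [hg_def]
      simp only
      rw [hww, abs_neg, abs_of_pos (by positivity : (0:ℝ) < (x^2)⁻¹),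
        ← ENNReal.ofReal_sub _ (div_nonneg (hrange x 1 hx0 one_pos).1 (by positivity)),
        ← ENNReal.ofReal_mul (by positivity)]
      congr 1
      field_simp
    rw [congr2, lintegral_sub hmA hAfin hle]
  -- I ≥ B1 + B2
  have hdisj : Disjoint (Set.Ioo (0:ℝ) 1) (Set.Ioi 1) :=
    Set.disjoint_left.2 fun x hx1 hx2 => absurd hx1.2 (not_lt.2 (le_of_lt hx2))
  have hsplit : (∫⁻ x in Set.Ioo (0:ℝ) 1, g x) + B2 ≤ I := by
    rw [hB2_def, ← lintegral_union measurableSet_Ioi hdisj]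
    exact lintegral_mono_set fun x hx =>
      hx.elim (fun h' => h'.1) fun h' => Set.mem_Ioi.2 (lt_trans one_pos h')
  -- conclude B2 ≤ A
  have hCAfin : C - A ≠ ⊤ := by
    intro hT
    exact (ENNReal.ofReal_lt_top.ne (le_antisymm le_top
      (hT ▸ (tsub_le_self.trans_eq hCL) : (⊤:ENNReal) ≤ ENNReal.ofReal L))).elim
  have hB2A : B2 ≤ A := by
    have h1 : (C - A) + B2 ≤ (C - A) + A := by
      calc (C - A) + B2 = (∫⁻ x in Set.Ioo (0:ℝ) 1, g x) + B2 := by rw [hB1]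
        _ ≤ I := hsplit
        _ ≤ ENNReal.ofReal L := hIL
        _ = C := hCL.symm
        _ = (C - A) + A := (tsub_add_cancel_of_le hAC).symm
    exact (ENNReal.add_le_add_iff_left hCAfin).1 h1
  have hle2 : (fun x : ℝ => ENNReal.ofReal (w x 1 / x^2))
      ≤ᵐ[volume.restrict (Set.Ioi (1:ℝ))] g := by
    rw [Filter.EventuallyLE, ae_restrict_iff' measurableSet_Ioi]
    filter_upwards with x hx
    have hx0 : (0:ℝ) < x := lt_trans one_pos hx
    have hx' : (1:ℝ) < x := hx
    have hx2 : (1:ℝ) ≤ x^2 := by nlinarith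
    exact ENNReal.ofReal_le_ofReal (div_le_self (hrange x 1 hx0 one_pos).1 hx2)
  have hAB2 : A ≤ B2 := lintegral_mono_ae hle2
  have hAeq : A = B2 := le_antisymm hAB2 hB2A
  -- difference integral is zero
  have hzero : (∫⁻ x in Set.Ioi (1:ℝ), (g x - ENNReal.ofReal (w x 1 / x^2))) = 0 := by
    rw [lintegral_sub hmA hAfin hle2, ← hB2_def, ← hA_def, hAeq, tsub_self]
  have haezero := (lintegral_eq_zero_iff (hg.sub hmA)).1 hzero
  -- a.e. vanishing of w on Ioi 1
  have haew : ∀ᵐ x ∂(volume.restrict (Set.Ioi (1:ℝ))), w x 1 = 0 := by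
    filter_upwards [haezero, ae_restrict_mem measurableSet_Ioi] with x hx hx1
    simp only [Pi.zero_apply] at hx
    have hx0 : (0:ℝ) < x := lt_trans one_pos hx1
    have hx1' : (1:ℝ) < x := hx1
    have hw0 := (hrange x 1 hx0 one_pos).1
    have hle3 : ENNReal.ofReal (w x 1) ≤ ENNReal.ofReal (w x 1 / x^2) :=
      tsub_eq_zero_iff_le.1 hx
    rw [ENNReal.ofReal_le_ofReal_iff (div_nonneg hw0 (by positivity))] at hle3
    have hx2 : (1:ℝ) < x^2 := by nlinarith
    by_contra hne
    have hwpos : 0 < w x 1 := lt_of_le_of_ne hw0 (Ne.symm hne)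
    have hlt := div_lt_self hwpos hx2
    linarith
  -- final conclusion
  intro b₁ b₂ hb₁ hlt
  have hb₂ : 0 < b₂ := lt_trans hb₁ hlt
  set t : ℝ := b₂ / b₁ with ht_def
  have ht1 : 1 < t := (one_lt_div hb₁).2 hlt
  have ht0 : 0 < t := lt_trans one_pos ht1
  obtain ⟨x, hx, hwx⟩ : ∃ x ∈ Set.Ioo (1:ℝ) t, w x 1 = 0 := by
    by_contra hcon
    push_neg at hcon
    have hsub : Set.Ioo (1:ℝ) t ⊆ {x : ℝ | ¬ w x 1 = 0} := fun x hx => hcon x hx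
    rw [ae_iff] at haew
    have h0 : volume.restrict (Set.Ioi (1:ℝ)) (Set.Ioo 1 t) = 0 :=
      measure_mono_null hsub haew
    rw [Measure.restrict_apply measurableSet_Ioo,
      Set.inter_eq_self_of_subset_left (fun y hy => hy.1), Real.volume_Ioo] at h0
    have ht : t - 1 ≤ 0 := by simpa [ENNReal.ofReal_eq_zero] using h0
    linarith
  have hwt : w t 1 = 0 := by
    have hmle : w t 1 ≤ w x 1 := hmono 1 one_pos x t (lt_trans one_pos hx.1) hx.2.le
    rw [hwx] at hmle
    exact le_antisymm hmle (hrange t 1 ht0 one_pos).1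
  have hw21 : w b₂ b₁ = 0 := by
    have e := hscale b₁ t 1 hb₁ ht0 one_pos
    rw [mul_one] at e
    have hb : b₁ * t = b₂ := by rw [ht_def]; field_simp
    rw [hb] at e
    rw [e, hwt]
  refine ⟨?_, hw21⟩
  have := hsum b₁ b₂ hb₁ hb₂
  linarith [hw21]
end

section
/- The LPT* allocation is locally efficient: for any bid vector b and machines i, k with b_i > b_k, the workload assigned by LPT* satisfies w_i(b) ≤ w_k(b). -/
/-- The LPT* allocation is locally efficient: if `b i > b k` then the workload of
machine `i` is at most that of machine `k`.  The LPT* allocation is described by: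
rounded speeds `s i = 2^{⌈log₂ (b i)⌉}`, a greedy assignment `A` of jobs (sorted in
nonincreasing length) minimizing `(w^j + l j)·s`, and a final reordering `π` within
equal rounded-speed classes so that a machine with smaller bid gets at least as much
workload. -/
theorem LPTstar_locally_efficient (m n : ℕ)
    (b : Fin m → ℝ) (hb : ∀ i, 0 < b i)
    (l : Fin n → ℝ) (hl : ∀ j, 0 < l j)
    (hlsorted : ∀ j j' : Fin n, j ≤ j' → l j' ≤ l j)
    -- rounded speeds
    (s : Fin m → ℝ) (hs : ∀ i, s i = (2 : ℝ) ^ (⌈Real.logb 2 (b i)⌉))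
    -- greedy assignment, with W j i the workload of machine i before job j
    (A : Fin n → Fin m) (W : Fin n → Fin m → ℝ)
    (hWdef : ∀ (j : Fin n) (i : Fin m),
      W j i = ∑ j' ∈ Finset.univ.filter (fun j' => j' < j ∧ A j' = i), l j')
    (hgreedy : ∀ (j : Fin n) (i : Fin m),
      (W j (A j) + l j) * s (A j) ≤ (W j i + l j) * s i)
    -- final workloads after reordering bundles by the permutation π,
    -- which only permutes machines of equal rounded speed
    (w : Fin m → ℝ) (π : Equiv.Perm (Fin m))
    (hπ : ∀ i, s (π i) = s i)
    (hwdef : ∀ i, w i = ∑ j ∈ Finset.univ.filter (fun j => A j = π i), l j)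
    -- among machines of the same rounded speed, a smaller bid gets more workload
    (hreorder : ∀ i k : Fin m, s i = s k → b k < b i → w i ≤ w k) :
    ∀ i k : Fin m, b k < b i → w i ≤ w k := by

  intro i k hbk
  by_cases hsik : s i = s k
  · exact hreorder i k hsik hbk
  -- rounded speeds differ, so s i ≥ 2 * s k
  have hspos : ∀ t : Fin m, 0 < s t := by
    intro t; rw [hs t]; positivity
  have hspeed : 2 * s k ≤ s i := by
    have hlogb : Real.logb 2 (b k) ≤ Real.logb 2 (b i) :=
      Real.logb_le_logb_of_le (by norm_num) (hb k) hbk.le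
    have hceil : ⌈Real.logb 2 (b k)⌉ ≤ ⌈Real.logb 2 (b i)⌉ := Int.ceil_le_ceil hlogb
    have hne : ⌈Real.logb 2 (b k)⌉ ≠ ⌈Real.logb 2 (b i)⌉ := by
      intro h; apply hsik; rw [hs i, hs k, h]
    have hlt : ⌈Real.logb 2 (b k)⌉ + 1 ≤ ⌈Real.logb 2 (b i)⌉ := lt_of_le_of_ne hceil hne
    calc 2 * s k = (2:ℝ) ^ (⌈Real.logb 2 (b k)⌉ + 1) := by
          rw [hs k, zpow_add_one₀ (by norm_num)]; ring
      _ ≤ (2:ℝ) ^ (⌈Real.logb 2 (b i)⌉) := by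
          exact zpow_le_zpow_right₀ (by norm_num) hlt
      _ = s i := (hs i).symm
  have hwk_nonneg : 0 ≤ w k := by
    rw [hwdef k]; exact Finset.sum_nonneg fun j _ => (hl j).le
  -- the set of jobs assigned to machine π i
  set S : Finset (Fin n) := Finset.univ.filter (fun j => A j = π i) with hS
  rcases eq_or_ne S ∅ with hSe | hSne
  · rw [hwdef i, ← hS, hSe, Finset.sum_empty]; exact hwk_nonneg
  · have hSne' : S.Nonempty := Finset.nonempty_iff_ne_empty.mpr hSne
    set j : Fin n := S.max' hSne' with hj
    have hjmem : j ∈ S := S.max'_mem hSne'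
    have hjA : A j = π i := by
      have := Finset.mem_filter.mp hjmem; exact this.2
    have hsplit : S = insert j (Finset.univ.filter (fun j' => j' < j ∧ A j' = π i)) := by
      ext x
      simp only [hS, Finset.mem_filter, Finset.mem_insert, Finset.mem_univ, true_and]
      constructor
      · intro hx
        have hxS : x ∈ S := by simp [hS, hx]
        have hxle : x ≤ j := S.le_max' x hxS
        rcases lt_or_eq_of_le hxle with h | h
        · exact Or.inr ⟨h, hx⟩
        · exact Or.inl h
      · rintro (rfl | ⟨_, hx⟩)
        · exact hjA
        · exact hx
    have hwi : w i = W j (π i) + l j := by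
      rw [hwdef i, ← hS, hsplit, Finset.sum_insert (by simp), hWdef j (π i)]
      ring
    have hWk_le : W j (π k) ≤ w k := by
      rw [hWdef j (π k), hwdef k]
      apply Finset.sum_le_sum_of_subset_of_nonneg
      · intro x hx
        simp only [Finset.mem_filter, Finset.mem_univ, true_and] at hx ⊢
        exact hx.2
      · intro x _ _; exact (hl x).le
    have hWi_nonneg : 0 ≤ W j (π i) := by
      rw [hWdef j (π i)]; exact Finset.sum_nonneg fun x _ => (hl x).le
    have hlj_le : l j ≤ w i := by rw [hwi]; linarith
    have hg := hgreedy j (π k)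
    rw [hjA, hπ i, hπ k] at hg
    rw [← hwi] at hg
    -- w i * s i ≤ (W j (π k) + l j) * s k ≤ (w k + w i) * s k
    have h1 : w i * (2 * s k) ≤ (w k + w i) * s k := by
      calc w i * (2 * s k) ≤ w i * s i := by
            apply mul_le_mul_of_nonneg_left hspeed
            linarith [hl j]
        _ ≤ (W j (π k) + l j) * s k := hg
        _ ≤ (w k + w i) * s k := by
            apply mul_le_mul_of_nonneg_right _ (hspos k).le
            linarith
    nlinarith [hspos k]
end

section
/- In the greedy LPT* assignment, if machine i has strictly larger rounded speed than machine k (s_i ≥ 2·s_k), then the final workloads satisfy w_k(b) ≥ w_i(b). More precisely, if j is the last job assigned to machine i, then w_k^j ≥ 2·w_i^j + l_j, where w^j denotes workloads just before job j is assigned. -/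
/-- In the greedy LPT* assignment, if machine `i` has rounded speed at least twice that
of machine `k`, then the final workloads satisfy `w k ≥ w i`; more precisely, if `j` is
the last job assigned to machine `i`, then `W j k ≥ 2·W j i + l j`, where `W j`
denotes workloads just before job `j` is assigned. -/
theorem LPTstar_greedy_speed_gap (m n : ℕ)
    (s : Fin m → ℝ) (l : Fin n → ℝ) (hl : ∀ j, 0 < l j)
    (A : Fin n → Fin m) (W : Fin n → Fin m → ℝ)
    (hWdef : ∀ (j : Fin n) (i : Fin m),
      W j i = ∑ j' ∈ Finset.univ.filter (fun j' => j' < j ∧ A j' = i), l j')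
    (hgreedy : ∀ (j : Fin n) (i : Fin m),
      (W j (A j) + l j) * s (A j) ≤ (W j i + l j) * s i)
    (i k : Fin m) (hsk : 0 < s k) (hgap : 2 * s k ≤ s i) :
    (∑ j ∈ Finset.univ.filter (fun j => A j = i), l j) ≤
      (∑ j ∈ Finset.univ.filter (fun j => A j = k), l j) ∧
    ∀ j : Fin n, A j = i → (∀ j' : Fin n, A j' = i → j' ≤ j) →
      2 * W j i + l j ≤ W j k := by
  have hWnonneg : ∀ (j : Fin n) (i' : Fin m), 0 ≤ W j i' := by
    intro j i'
    rw [hWdef]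
    exact Finset.sum_nonneg fun j' _ => (hl j').le
  have hkey : ∀ j : Fin n, A j = i → 2 * W j i + l j ≤ W j k := by
    intro j hA
    have h := hgreedy j k
    rw [hA] at h
    have h0 : 0 ≤ W j i + l j := by nlinarith [hWnonneg j i, hl j]
    have h1 : (W j i + l j) * (2 * s k) ≤ (W j i + l j) * s i :=
      mul_le_mul_of_nonneg_left hgap h0
    nlinarith [hl j]
  refine ⟨?_, fun j hA _ => hkey j hA⟩
  set S := Finset.univ.filter (fun j => A j = i) with hS
  rcases S.eq_empty_or_nonempty with hE | hne
  · rw [hE]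
    simp only [Finset.sum_empty]
    exact Finset.sum_nonneg fun j _ => (hl j).le
  · set j := S.max' hne with hj
    have hjS : j ∈ S := S.max'_mem hne
    have hAj : A j = i := by simpa [hS] using hjS
    have herase : S.erase j = Finset.univ.filter (fun j' => j' < j ∧ A j' = i) := by
      ext x
      simp only [Finset.mem_erase, hS, Finset.mem_filter, Finset.mem_univ, true_and]
      constructor
      · rintro ⟨hne', hAx⟩
        exact ⟨lt_of_le_of_ne (S.le_max' x (by simp [hS, hAx])) hne', hAx⟩
      · rintro ⟨hlt, hAx⟩
        exact ⟨hlt.ne, hAx⟩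
    have hsum : ∑ j' ∈ S, l j' = W j i + l j := by
      rw [← Finset.sum_erase_add S l hjS, herase, hWdef]
    have hWk : W j k ≤ ∑ j' ∈ Finset.univ.filter (fun j' => A j' = k), l j' := by
      rw [hWdef]
      apply Finset.sum_le_sum_of_subset_of_nonneg
      · intro x hx
        simp only [Finset.mem_filter, Finset.mem_univ, true_and] at hx ⊢
        exact hx.2
      · exact fun x _ _ => (hl x).le
    have := hkey j hAj
    have := hWnonneg j i
    linarith [hsum, hWk]
end

section
/- Let w : ℝ_{>0} × ℝ_{>0} → [0, L] be scalable (w(cx,ca) = w(x,a) for c>0) with w(x,a) + w(a,x) = L, monotone nonincreasing in the first argument, and suppose there exists k > 1 such that w(x,a) > 0 for x < ka and w(x,a) = 0 for x > ka (for all a > 0). Then for every a > 0: ∫_0^∞ w(x,a) dx ≥ (L + g(k))·a, where g(k) = (4k²/(k+1)² − 1)·∫_{1/k}^{(k+1)/(2k)} w(1,y) dy > 0. -/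
open MeasureTheory

set_option maxHeartbeats 2000000 in
/-- If `w` is a scalable, monotone nonincreasing two-machine allocation with
`w(x,a) + w(a,x) = L`, positive below the threshold `k·a` and vanishing above it,
then `∫_0^∞ w(x, a) dx ≥ (L + g(k))·a`, where
`g(k) = (4k²/(k+1)² − 1)·∫_{1/k}^{(k+1)/(2k)} w(1, y) dy > 0`. -/
theorem scalable_IR_lower_bound (L : ℝ) (hL : 0 < L) (w : ℝ → ℝ → ℝ)
    (k : ℝ) (hk : 1 < k)
    (hmeas : Measurable (Function.uncurry w))
    (hrange : ∀ x a : ℝ, 0 < x → 0 < a → 0 ≤ w x a ∧ w x a ≤ L)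
    (hscale : ∀ c x a : ℝ, 0 < c → 0 < x → 0 < a → w (c * x) (c * a) = w x a)
    (hsum : ∀ x a : ℝ, 0 < x → 0 < a → w x a + w a x = L)
    (hmono : ∀ a : ℝ, 0 < a → ∀ x y : ℝ, 0 < x → x ≤ y → w y a ≤ w x a)
    (hpos : ∀ a x : ℝ, 0 < a → 0 < x → x < k * a → 0 < w x a)
    (hzero : ∀ a x : ℝ, 0 < a → k * a < x → w x a = 0) :
    0 < (4 * k ^ 2 / (k + 1) ^ 2 - 1) *
        ∫ y in Set.Ioc (1 / k) ((k + 1) / (2 * k)), w 1 y ∧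
    ∀ a : ℝ, 0 < a →
      (L + (4 * k ^ 2 / (k + 1) ^ 2 - 1) *
          ∫ y in Set.Ioc (1 / k) ((k + 1) / (2 * k)), w 1 y) * a ≤
        ∫ x in Set.Ioi (0 : ℝ), w x a := by
  have hk0 : (0:ℝ) < k := by linarith
  set r : ℝ := 4 * k ^ 2 / (k + 1) ^ 2 with hr
  set m0 : ℝ := (k + 1) / (2 * k) with hm0def
  set I : ℝ := ∫ y in Set.Ioc (1 / k) m0, w 1 y with hIdef
  have hr1 : 1 < r := by
    rw [hr, lt_div_iff₀ (by positivity)]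
    nlinarith
  -- measurability
  have mw1 : ∀ a : ℝ, Measurable fun x => w x a := fun a =>
    hmeas.comp (measurable_id.prodMk measurable_const)
  have mw2 : ∀ a : ℝ, Measurable fun y => w a y := fun a =>
    hmeas.comp (measurable_const.prodMk measurable_id)
  -- generic bounded integrability
  have hint : ∀ (f : ℝ → ℝ) (s : Set ℝ) (M : ℝ), Measurable f → MeasurableSet s →
      volume s ≠ ⊤ → (∀ x ∈ s, |f x| ≤ M) → IntegrableOn f s := by
    intro f s M hf hs hvs hbd
    exact Measure.integrableOn_of_bounded hvs hf.aestronglyMeasurable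
      ((ae_restrict_iff' hs).2 (ae_of_all _ fun x hx => by
        simpa [Real.norm_eq_abs] using hbd x hx))
  have hbdd : ∀ x a : ℝ, 0 < x → 0 < a → |w x a| ≤ L := fun x a hx ha =>
    abs_le.2 ⟨by linarith [(hrange x a hx ha).1], (hrange x a hx ha).2⟩
  -- monotone nondecreasing in the second argument
  have hmono2 : ∀ a : ℝ, 0 < a → ∀ x y : ℝ, 0 < x → x ≤ y → w a x ≤ w a y := by
    intro a ha x y hx hxy
    have hy : 0 < y := lt_of_lt_of_le hx hxy
    have e1 := hsum x a hx ha
    have e2 := hsum y a hy ha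
    have := hmono a ha x y hx hxy
    linarith
  -- basic interval facts
  have hm0a : 1 / k < m0 := by
    rw [hm0def, div_lt_div_iff₀ hk0 (by positivity)]; nlinarith
  have hm0b : m0 < 1 := by
    rw [hm0def, div_lt_one (by positivity)]; linarith
  have hm00 : 0 < m0 := lt_trans (by positivity) hm0a
  -- Part 1 : positivity of the gain
  have hIpos : 0 < I := by
    set c : ℝ := (1 / k + m0) / 2 with hcdef
    have hc1 : 1 / k < c := by rw [hcdef]; linarith
    have hc2 : c < m0 := by rw [hcdef]; linarith
    have hc0 : 0 < c := lt_trans (by positivity) hc1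
    have hwc : 0 < w 1 c := by
      refine hpos c 1 hc0 one_pos ?_
      have := mul_lt_mul_of_pos_left hc1 hk0
      rw [mul_one_div, div_self hk0.ne'] at this
      linarith
    have intI : IntegrableOn (fun y => w 1 y) (Set.Ioc (1 / k) m0) :=
      hint _ _ L (mw2 1) measurableSet_Ioc measure_Ioc_lt_top.ne
        (fun x hx => hbdd 1 x one_pos (lt_trans (by positivity) hx.1))
    have step1 : w 1 c * (m0 - c) ≤ ∫ y in Set.Ioc c m0, w 1 y := by
      have := setIntegral_mono_on (f := fun _ => w 1 c) (g := fun y => w 1 y)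
        (μ := volume) (s := Set.Ioc c m0)
        (integrableOn_const measure_Ioc_lt_top.ne)
        (intI.mono_set (Set.Ioc_subset_Ioc_left hc1.le))
        measurableSet_Ioc
        (fun y hy => hmono2 1 one_pos c y hc0 hy.1.le)
      rw [setIntegral_const, Real.volume_real_Ioc_of_le (by linarith), smul_eq_mul] at this
      linarith [this, mul_comm (m0 - c) (w 1 c)]
    have step2 : (∫ y in Set.Ioc c m0, w 1 y) ≤ I := by
      refine setIntegral_mono_set intI ?_
        (HasSubset.Subset.eventuallyLE (Set.Ioc_subset_Ioc_left hc1.le))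
      exact (ae_restrict_iff' measurableSet_Ioc).2 (ae_of_all _ fun y hy =>
        (hrange 1 y one_pos (lt_trans (by positivity) hy.1)).1)
    have : 0 < w 1 c * (m0 - c) := mul_pos hwc (by linarith)
    linarith
  refine ⟨mul_pos (by linarith : (0:ℝ) < r - 1) hIpos, ?_⟩
  -- Part 2 : the main bound
  intro a ha
  have ha' : a ≠ 0 := ha.ne'
  set p : ℝ := a / k with hpdef
  set m : ℝ := a * m0 with hmdef
  have hp0 : 0 < p := by rw [hpdef]; positivity
  have hm' : 0 < m := by rw [hmdef]; exact mul_pos ha hm00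
  have hpm : p < m := by
    have := mul_lt_mul_of_pos_left hm0a ha
    rw [mul_one_div] at this
    rw [hpdef, hmdef]; linarith
  have hma : m < a := by
    have := mul_lt_mul_of_pos_left hm0b ha
    rw [mul_one] at this
    rw [hmdef]; linarith
  have hpa : p < a := lt_trans hpm hma
  have haka : a < k * a := by nlinarith
  have hka0 : 0 < k * a := by positivity
  -- integrability pieces
  have intA : IntegrableOn (fun x => w x a) (Set.Ioc 0 (k * a)) :=
    hint _ _ L (mw1 a) measurableSet_Ioc measure_Ioc_lt_top.ne
      (fun x hx => hbdd x a hx.1 ha)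
  have intB : IntegrableOn (fun x => w x a) (Set.Ioc p a) :=
    intA.mono_set (Set.Ioc_subset_Ioc hp0.le haka.le)
  have intC : IntegrableOn (fun x => w x a) (Set.Ioc a (k * a)) :=
    intA.mono_set (Set.Ioc_subset_Ioc_left ha.le)
  have intAB : IntegrableOn (fun x => w x a) (Set.Ioc 0 p) :=
    intA.mono_set (Set.Ioc_subset_Ioc_right (by linarith))
  have intBC : IntegrableOn (fun x => w x a) (Set.Ioc p (k * a)) :=
    intA.mono_set (Set.Ioc_subset_Ioc_left hp0.le)
  have intD : IntegrableOn (fun x => w x a) (Set.Ioi (k * a)) :=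
    (integrableOn_zero : IntegrableOn (fun _ : ℝ => (0:ℝ)) (Set.Ioi (k * a)) volume).congr_fun
      (fun x hx => (hzero a x ha hx).symm) measurableSet_Ioi
  have intW1 : IntegrableOn (fun x => w x a) (Set.Ioo p a) :=
    hint _ _ L (mw1 a) measurableSet_Ioo measure_Ioo_lt_top.ne
      (fun x hx => hbdd x a (lt_trans hp0 hx.1) ha)
  have intW2 : IntegrableOn (fun t => w a t) (Set.Ioo p a) :=
    hint _ _ L (mw2 a) measurableSet_Ioo measure_Ioo_lt_top.ne
      (fun t ht => hbdd a t ha (lt_trans hp0 ht.1))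
  have intJ : IntegrableOn (fun t => w a t) (Set.Ioc p m) :=
    hint _ _ L (mw2 a) measurableSet_Ioc measure_Ioc_lt_top.ne
      (fun t ht => hbdd a t ha (lt_trans hp0 ht.1))
  have intW2b : IntegrableOn (fun t => w a t) (Set.Ioo m a) :=
    intW2.mono_set (fun x hx => ⟨lt_trans hpm hx.1, hx.2⟩)
  have intG : IntegrableOn (fun t => a ^ 2 / t ^ 2 * w a t) (Set.Ioo p a) := by
    refine hint _ _ (k ^ 2 * L) ((measurable_const.div (measurable_id.pow_const 2)).mul (mw2 a))
      measurableSet_Ioo measure_Ioo_lt_top.ne ?_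
    intro t ht
    have ht0 : 0 < t := lt_trans hp0 ht.1
    have hat : a < k * t := by
      have h' : a / k < t := by rw [← hpdef]; exact ht.1
      rw [div_lt_iff₀ hk0] at h'
      linarith [mul_comm t k]
    have h1 : a ^ 2 / t ^ 2 ≤ k ^ 2 := by
      rw [div_le_iff₀ (by positivity)]; nlinarith [mul_pos ht0 ht0, hat]
    rw [abs_mul, abs_of_nonneg (by positivity : (0:ℝ) ≤ a ^ 2 / t ^ 2)]
    exact mul_le_mul h1 (hbdd a t ha ht0) (abs_nonneg _) (by positivity)
  -- splitting the integral over (0,∞)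
  have hsplit : (∫ x in Set.Ioi (0:ℝ), w x a) =
      (∫ x in Set.Ioc 0 p, w x a) + (∫ x in Set.Ioc p a, w x a) +
      (∫ x in Set.Ioc a (k * a), w x a) + ∫ x in Set.Ioi (k * a), w x a := by
    have s1 : (∫ x in Set.Ioi (0:ℝ), w x a) =
        (∫ x in Set.Ioc 0 (k * a), w x a) + ∫ x in Set.Ioi (k * a), w x a := by
      rw [← Set.Ioc_union_Ioi_eq_Ioi hka0.le,
        setIntegral_union (Set.Ioc_disjoint_Ioi le_rfl) measurableSet_Ioi intA intD]
    have s2 : (∫ x in Set.Ioc (0:ℝ) (k * a), w x a) =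
        (∫ x in Set.Ioc 0 p, w x a) + ∫ x in Set.Ioc p (k * a), w x a := by
      rw [← Set.Ioc_union_Ioc_eq_Ioc hp0.le (by linarith : p ≤ k * a),
        setIntegral_union (Set.Ioc_disjoint_Ioc_of_le le_rfl) measurableSet_Ioc intAB intBC]
    have s3 : (∫ x in Set.Ioc p (k * a), w x a) =
        (∫ x in Set.Ioc p a, w x a) + ∫ x in Set.Ioc a (k * a), w x a := by
      rw [← Set.Ioc_union_Ioc_eq_Ioc hpa.le haka.le,
        setIntegral_union (Set.Ioc_disjoint_Ioc_of_le le_rfl) measurableSet_Ioc intB intC]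
    rw [s1, s2, s3]; ring
  -- piece D is zero
  have eD : (∫ x in Set.Ioi (k * a), w x a) = 0 := by
    rw [setIntegral_congr_fun (g := fun _ => (0:ℝ)) measurableSet_Ioi
      (fun x hx => hzero a x ha hx)]
    simp
  -- piece A is L * p
  have eA : (∫ x in Set.Ioc 0 p, w x a) = L * p := by
    have hcong : Set.EqOn (fun x => w x a) (fun _ => L) (Set.Ioo 0 p) := by
      intro x hx
      have hx0 : 0 < x := hx.1
      have hz : w a x = 0 := by
        refine hzero x a hx0 ?_
        have h' : x < a / k := by rw [← hpdef]; exact hx.2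
        rw [lt_div_iff₀ hk0] at h'
        linarith [mul_comm x k]
      have := hsum x a hx0 ha
      simp only
      linarith
    rw [integral_Ioc_eq_integral_Ioo, setIntegral_congr_fun measurableSet_Ioo hcong,
      setIntegral_const, Real.volume_real_Ioo_of_le (by linarith), smul_eq_mul]
    ring
  -- the substitution x = a^2 / t on the piece (a, k*a)
  have key : (∫ x in Set.Ioc a (k * a), w x a) =
      ∫ t in Set.Ioo p a, a ^ 2 / t ^ 2 * w a t := by
    have himg : (fun t => a ^ 2 / t) '' Set.Ioo p a = Set.Ioo a (k * a) := by
      ext x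
      simp only [Set.mem_image, Set.mem_Ioo]
      constructor
      · rintro ⟨t, ⟨ht1, ht2⟩, rfl⟩
        have ht0 : 0 < t := lt_trans hp0 ht1
        have h1 : a < k * t := by
          have h' : a / k < t := by rw [← hpdef]; exact ht1
          rw [div_lt_iff₀ hk0] at h'
          linarith [mul_comm t k]
        constructor
        · rw [lt_div_iff₀ ht0]; nlinarith [mul_lt_mul_of_pos_left ht2 ha]
        · rw [div_lt_iff₀ ht0]; nlinarith [mul_lt_mul_of_pos_left h1 ha]
      · rintro ⟨hx1, hx2⟩
        have hx0 : 0 < x := lt_trans ha hx1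
        have hx0' : x ≠ 0 := hx0.ne'
        refine ⟨a ^ 2 / x, ⟨?_, ?_⟩, by field_simp⟩
        · rw [hpdef, div_lt_div_iff₀ hk0 hx0]
          nlinarith [mul_lt_mul_of_pos_left hx2 ha]
        · rw [div_lt_iff₀ hx0]; nlinarith [mul_lt_mul_of_pos_left hx1 ha]
    have hderiv : ∀ t ∈ Set.Ioo p a,
        HasDerivWithinAt (fun t => a ^ 2 / t) (-(a ^ 2) / t ^ 2) (Set.Ioo p a) t := by
      intro t ht
      have ht0 : 0 < t := lt_trans hp0 ht.1
      have h := (hasDerivAt_inv ht0.ne').const_mul (a ^ 2)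
      have h2 : HasDerivAt (fun t => a ^ 2 / t) (-(a ^ 2) / t ^ 2) t := by
        simp only [div_eq_mul_inv]
        convert h using 1
        have ht0' : t ≠ 0 := ht0.ne'
        all_goals first | rfl | ring
      exact h2.hasDerivWithinAt
    have hinj : Set.InjOn (fun t => a ^ 2 / t) (Set.Ioo p a) := by
      intro t1 h1 t2 h2 he
      have ht1 : (0:ℝ) < t1 := lt_trans hp0 h1.1
      have ht2 : (0:ℝ) < t2 := lt_trans hp0 h2.1
      have ht1' : t1 ≠ 0 := ht1.ne'
      have ht2' : t2 ≠ 0 := ht2.ne'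
      simp only at he
      field_simp at he
      nlinarith [he]
    rw [integral_Ioc_eq_integral_Ioo, ← himg,
      integral_image_eq_integral_abs_deriv_smul measurableSet_Ioo hderiv hinj]
    refine setIntegral_congr_fun measurableSet_Ioo (fun t ht => ?_)
    have ht0 : 0 < t := lt_trans hp0 ht.1
    have ht0' : t ≠ 0 := ht0.ne'
    have hw : w (a ^ 2 / t) a = w a t := by
      have hh := hscale (t / a) (a ^ 2 / t) a (by positivity) (by positivity) ha
      rw [show t / a * (a ^ 2 / t) = a by field_simp,
        show t / a * a = t by field_simp] at hh
      exact hh.symm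
    rw [smul_eq_mul, hw, abs_div, abs_neg, abs_of_nonneg (by positivity : (0:ℝ) ≤ a ^ 2),
      abs_of_nonneg (by positivity : (0:ℝ) ≤ t ^ 2)]
  -- the substitution t = a * y relating the gain interval to I
  have key2 : (∫ t in Set.Ioc p m, w a t) = a * I := by
    have himg : (fun y => a * y) '' Set.Ioc (1 / k) m0 = Set.Ioc p m := by
      ext t
      simp only [Set.mem_image, Set.mem_Ioc]
      constructor
      · rintro ⟨y, ⟨hy1, hy2⟩, rfl⟩
        constructor
        · rw [hpdef]
          calc a / k = a * (1 / k) := by ring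
            _ < a * y := mul_lt_mul_of_pos_left hy1 ha
        · rw [hmdef]; exact mul_le_mul_of_nonneg_left hy2 ha.le
      · rintro ⟨ht1, ht2⟩
        refine ⟨t / a, ⟨?_, ?_⟩, by rw [mul_comm, div_mul_cancel₀ _ ha']⟩
        · rw [div_lt_div_iff₀ hk0 ha]
          have h' : a / k < t := by rw [← hpdef]; exact ht1
          rw [div_lt_iff₀ hk0] at h'
          linarith
        · rw [div_le_iff₀ ha]
          have h' : t ≤ a * m0 := by rw [← hmdef]; exact ht2
          linarith [mul_comm a m0]
    have hderiv : ∀ y ∈ Set.Ioc (1 / k) m0,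
        HasDerivWithinAt (fun y => a * y) a (Set.Ioc (1 / k) m0) y := by
      intro y _
      simpa using ((hasDerivAt_id y).const_mul a).hasDerivWithinAt
    have hinj : Set.InjOn (fun y => a * y) (Set.Ioc (1 / k) m0) :=
      fun y1 _ y2 _ he => mul_left_cancel₀ ha' he
    rw [← himg, integral_image_eq_integral_abs_deriv_smul measurableSet_Ioc hderiv hinj,
      hIdef, ← integral_const_mul]
    refine setIntegral_congr_fun measurableSet_Ioc (fun y hy => ?_)
    have hy0 : 0 < y := lt_trans (by positivity) hy.1
    have hh := hscale a 1 y ha one_pos hy0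
    rw [mul_one] at hh
    rw [smul_eq_mul, hh, abs_of_pos ha]
  -- splitting (p, a) at m
  have hdisj : Disjoint (Set.Ioc p m) (Set.Ioo m a) :=
    Set.disjoint_left.2 fun x hx1 hx2 => absurd hx2.1 (not_lt.2 hx1.2)
  have split2a : (∫ t in Set.Ioo p a, w a t) =
      (∫ t in Set.Ioc p m, w a t) + ∫ t in Set.Ioo m a, w a t := by
    rw [← setIntegral_union hdisj measurableSet_Ioo intJ intW2b,
      Set.Ioc_union_Ioo_eq_Ioo hpm.le hma]
  have intG1 : IntegrableOn (fun t => a ^ 2 / t ^ 2 * w a t) (Set.Ioc p m) :=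
    intG.mono_set (fun x hx => ⟨hx.1, lt_of_le_of_lt hx.2 hma⟩)
  have intG2 : IntegrableOn (fun t => a ^ 2 / t ^ 2 * w a t) (Set.Ioo m a) :=
    intG.mono_set (fun x hx => ⟨lt_trans hpm hx.1, hx.2⟩)
  have split2b : (∫ t in Set.Ioo p a, a ^ 2 / t ^ 2 * w a t) =
      (∫ t in Set.Ioc p m, a ^ 2 / t ^ 2 * w a t) +
        ∫ t in Set.Ioo m a, a ^ 2 / t ^ 2 * w a t := by
    rw [← setIntegral_union hdisj measurableSet_Ioo intG1 intG2,
      Set.Ioc_union_Ioo_eq_Ioo hpm.le hma]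
  -- pointwise bounds
  have bound1 : r * (∫ t in Set.Ioc p m, w a t) ≤
      ∫ t in Set.Ioc p m, a ^ 2 / t ^ 2 * w a t := by
    rw [← integral_const_mul]
    refine setIntegral_mono_on (intJ.const_mul r) intG1 measurableSet_Ioc ?_
    intro t ht
    have ht0 : 0 < t := lt_trans hp0 ht.1
    have hw0 : 0 ≤ w a t := (hrange a t ha ht0).1
    have h2kt : 2 * k * t ≤ (k + 1) * a := by
      have h' : t ≤ a * m0 := by rw [← hmdef]; exact ht.2
      have h2 : 2 * k * (a * m0) = (k + 1) * a := by
        rw [hm0def]; field_simp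
      nlinarith [mul_le_mul_of_nonneg_left h' (by positivity : (0:ℝ) ≤ 2 * k)]
    have hrle : r ≤ a ^ 2 / t ^ 2 := by
      rw [hr, div_le_div_iff₀ (by positivity) (by positivity)]
      nlinarith [mul_self_le_mul_self (by positivity : (0:ℝ) ≤ 2 * k * t) h2kt]
    exact mul_le_mul_of_nonneg_right hrle hw0
  have bound2 : (∫ t in Set.Ioo m a, w a t) ≤
      ∫ t in Set.Ioo m a, a ^ 2 / t ^ 2 * w a t := by
    refine setIntegral_mono_on intW2b intG2 measurableSet_Ioo ?_
    intro t ht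
    have ht0 : 0 < t := lt_trans hm' ht.1
    have hw0 : 0 ≤ w a t := (hrange a t ha ht0).1
    have h1 : 1 ≤ a ^ 2 / t ^ 2 := by
      rw [le_div_iff₀ (by positivity)]; nlinarith [ht.2]
    calc w a t = 1 * w a t := (one_mul _).symm
      _ ≤ a ^ 2 / t ^ 2 * w a t := mul_le_mul_of_nonneg_right h1 hw0
  -- complement identity on (p, a)
  have eBC : (∫ x in Set.Ioo p a, w x a) + (∫ t in Set.Ioo p a, w a t) = L * (a - p) := by
    rw [← integral_add intW1 intW2,
      setIntegral_congr_fun (g := fun _ => L) measurableSet_Ioo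
        (fun x hx => hsum x a (lt_trans hp0 hx.1) ha),
      setIntegral_const, Real.volume_real_Ioo_of_le (by linarith), smul_eq_mul]
    ring
  -- assemble everything
  have hB : (∫ x in Set.Ioc p a, w x a) = ∫ x in Set.Ioo p a, w x a :=
    integral_Ioc_eq_integral_Ioo
  rw [hsplit, eD, eA, key, hB, split2b]
  have expand : (L + (r - 1) * I) * a
      = L * a + (r - 1) * ∫ t in Set.Ioc p m, w a t := by
    rw [key2]; ring
  rw [expand]
  have hrJ : (r - 1) * (∫ t in Set.Ioc p m, w a t)
      = r * (∫ t in Set.Ioc p m, w a t) - ∫ t in Set.Ioc p m, w a t := by ring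
  have hLa : L * (a - p) = L * a - L * p := by ring
  linarith [bound1, bound2, eBC, split2a, hrJ, hLa]
end

section
/- The makespan-minimizing allocation for two machines (tie-broken by minimizing total completion time) is monotone: if the allocation at bids (b₁, b₂) gives workloads (L₁, L₂) with b₁L₁ ≥ b₂L₂, and machine 2 raises its bid to b₂' > b₂ producing workloads (L₁', L₂'), then L₂' ≤ L₂. -/
/-- The makespan-minimizing allocation for two machines (with ties broken by
minimizing total completion time, assumed to select a unique optimum) is monotone:
if the allocation at bids `(b₁, b₂)` gives workloads `(L₁, L₂)` with `b₁L₁ ≥ b₂L₂`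
and machine 2 raises its bid to `b₂' > b₂` producing workloads `(L₁', L₂')`, then
`L₂' ≤ L₂`.  An allocation is a subset `S` of the jobs given to machine 1. -/
theorem makespan_min_allocation_monotone (n : ℕ) (l : Fin n → ℝ)
    (hl : ∀ j, 0 < l j)
    (b₁ b₂ b₂' : ℝ) (hb₁ : 0 < b₁) (hb₂ : 0 < b₂) (hb₂' : b₂ < b₂')
    (S S' : Finset (Fin n))
    -- S is the unique lexicographic (makespan, total completion time) optimum at (b₁, b₂)
    (hopt : ∀ T : Finset (Fin n), T ≠ S →
      max (b₁ * ∑ j ∈ S, l j) (b₂ * ∑ j ∈ Sᶜ, l j) <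
          max (b₁ * ∑ j ∈ T, l j) (b₂ * ∑ j ∈ Tᶜ, l j) ∨
        (max (b₁ * ∑ j ∈ S, l j) (b₂ * ∑ j ∈ Sᶜ, l j) =
            max (b₁ * ∑ j ∈ T, l j) (b₂ * ∑ j ∈ Tᶜ, l j) ∧
          b₁ * ∑ j ∈ S, l j + b₂ * ∑ j ∈ Sᶜ, l j <
            b₁ * ∑ j ∈ T, l j + b₂ * ∑ j ∈ Tᶜ, l j))
    -- S' is the unique lexicographic optimum at (b₁, b₂')
    (hopt' : ∀ T : Finset (Fin n), T ≠ S' →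
      max (b₁ * ∑ j ∈ S', l j) (b₂' * ∑ j ∈ S'ᶜ, l j) <
          max (b₁ * ∑ j ∈ T, l j) (b₂' * ∑ j ∈ Tᶜ, l j) ∨
        (max (b₁ * ∑ j ∈ S', l j) (b₂' * ∑ j ∈ S'ᶜ, l j) =
            max (b₁ * ∑ j ∈ T, l j) (b₂' * ∑ j ∈ Tᶜ, l j) ∧
          b₁ * ∑ j ∈ S', l j + b₂' * ∑ j ∈ S'ᶜ, l j <
            b₁ * ∑ j ∈ T, l j + b₂' * ∑ j ∈ Tᶜ, l j))
    -- w.l.o.g. machine 1 determines the makespan at (b₁, b₂)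
    (hwlog : b₂ * ∑ j ∈ Sᶜ, l j ≤ b₁ * ∑ j ∈ S, l j) :
    ∑ j ∈ S'ᶜ, l j ≤ ∑ j ∈ Sᶜ, l j := by
  by_contra h
  push_neg at h
  set A := ∑ j ∈ S, l j with hAdef
  set Ab := ∑ j ∈ Sᶜ, l j with hAbdef
  set A' := ∑ j ∈ S', l j with hA'def
  set Ab' := ∑ j ∈ S'ᶜ, l j with hAb'def
  have hne : S ≠ S' := by
    intro he
    have : Ab' = Ab := by rw [hAb'def, hAbdef, he]
    linarith
  have htot : A + Ab = A' + Ab' := by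
    rw [hAdef, hAbdef, hA'def, hAb'def, Finset.sum_add_sum_compl,
      Finset.sum_add_sum_compl]
  have hA : A' < A := by linarith
  have h1 : b₁ * A ≤ max (b₁ * A') (b₂ * Ab') := by
    rcases hopt S' hne.symm with h' | ⟨h', _⟩
    · rw [max_eq_left hwlog] at h'; exact le_of_lt h'
    · rw [max_eq_left hwlog] at h'; exact le_of_eq h'
  have hAA : b₁ * A' < b₁ * A := by
    exact mul_lt_mul_of_pos_left hA hb₁
  have h2 : b₁ * A ≤ b₂ * Ab' := by
    rcases le_total (b₁ * A') (b₂ * Ab') with h' | h'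
    · rw [max_eq_right h'] at h1; exact h1
    · rw [max_eq_left h'] at h1; linarith
  have hAb0 : 0 ≤ Ab := Finset.sum_nonneg fun j _ => (hl j).le
  have hAb'0 : 0 < Ab' := lt_of_le_of_lt hAb0 h
  have h3 : b₂ * Ab' < b₂' * Ab' := mul_lt_mul_of_pos_right hb₂' hAb'0
  have hb₂'pos : 0 < b₂' := lt_trans hb₂ hb₂'
  have h4 : b₂' * Ab < b₂' * Ab' := mul_lt_mul_of_pos_left h hb₂'pos
  have key : max (b₁ * A) (b₂' * Ab) < max (b₁ * A') (b₂' * Ab') :=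
    lt_of_lt_of_le (max_lt (by linarith) (by linarith)) (le_max_right _ _)
  rcases hopt' S hne with h' | ⟨h', _⟩ <;> linarith
end
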